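/- arXiv:2512.12886 — 5 statements merged into one kernel-verified Lean document; each statement's English description precedes it below -/
import Mathlib

section
/- Let T be a finite TD-unmixed balanced tree. Then the odd-open neighborhood ideal N_odd(T) in the polynomial ring k[x_v : v ∈ V(T)] over a field k is geometrically vertex decomposable. -/
open scoped Classical

section GraphDefs

variable {V : Type} (G : SimpleGraph V)

/-- A leaf is a vertex of degree 1. -/
def IsLeafVx (v : V) : Prop := (G.neighborSet v).ncard = 1

/-- The height of a vertex: the minimum distance to a leaf in its connected
component (`0` if there is no leaf reachable from it, e.g. for isolated vertices). -/
noncomputable def heightVx (v : V) : ℕ :=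
  sInf {n | ∃ l, IsLeafVx G l ∧ G.Reachable v l ∧ G.dist v l = n}

/-- The height of a graph: the maximum height of a vertex. -/
noncomputable def heightGr : ℕ := sSup (Set.range (heightVx G))

/-- A graph is balanced if no two adjacent vertices have the same height. -/
def IsBalanced : Prop := ∀ u w, G.Adj u w → heightVx G u ≠ heightVx G w

/-- The open neighborhood of a set of vertices. -/
def nbhd (S : Set V) : Set V := {u | ∃ v ∈ S, G.Adj v u}

/-- A total dominating set: `N(S) = V`. -/
def IsTDSet (S : Set V) : Prop := nbhd G S = Set.univ

/-- A minimal total dominating set. -/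
def IsMinTDSet (S : Set V) : Prop := IsTDSet G S ∧ ∀ S' ⊂ S, ¬ IsTDSet G S'

/-- A graph is TD-unmixed if all of its minimal total dominating sets have
the same cardinality. -/
def TDUnmixed : Prop :=
  ∀ S₁ S₂ : Set V, IsMinTDSet G S₁ → IsMinTDSet G S₂ → S₁.ncard = S₂.ncard

/-- A forest is TD-unmixed if every connected component is TD-unmixed. -/
def ComponentwiseTDUnmixed : Prop :=
  ∀ c : G.ConnectedComponent, TDUnmixed (G.induce c.supp)

end GraphDefs

section GVDDefs

/-- The squarefree monomial whose support is the finite set `s`. -/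
noncomputable def sqMono (k : Type) [Field k] {σ : Type} (s : Finset σ) : MvPolynomial σ k :=
  ∏ i ∈ s, MvPolynomial.X i

/-- The squarefree monomial ideal generated by the monomials with supports in `F`. -/
noncomputable def sqSpan (k : Type) [Field k] {σ : Type} (F : Set (Finset σ)) :
    Ideal (MvPolynomial σ k) :=
  Ideal.span {m | ∃ s ∈ F, m = sqMono k s}

/-- The height of a prime ideal. -/
noncomputable def primeHt {R : Type*} [CommRing R] (P : Ideal R) (hP : P.IsPrime) : ℕ∞ :=
  Order.height (⟨P, hP⟩ : PrimeSpectrum R)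

/-- An ideal is unmixed if all of its minimal primes have the same height. -/
def UnmixedIdeal {R : Type*} [CommRing R] (I : Ideal R) : Prop :=
  ∀ P Q : Ideal R, ∀ hP : P ∈ I.minimalPrimes, ∀ hQ : Q ∈ I.minimalPrimes,
    primeHt P hP.1.1 = primeHt Q hQ.1.1

/-- View a finset of `σ` as a finset of `{x : σ // x ≠ y}` (dropping `y`). -/
noncomputable def dropVar {σ : Type} (y : σ) (s : Finset σ) : Finset {x : σ // x ≠ y} :=
  s.subtype (· ≠ y)

/-- Supports of the generators of `N_{y,I}`: the given generators not divisible by `y`. -/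
def NFam {σ : Type} (y : σ) (F : Set (Finset σ)) : Set (Finset σ) := {s ∈ F | y ∉ s}

/-- Supports of the generators of `C_{y,I}`: the given generators with `y` divided out
(together with the generators not divisible by `y`). -/
noncomputable def CFam {σ : Type} (y : σ) (F : Set (Finset σ)) : Set (Finset σ) :=
  (fun s => s.erase y) '' F

/-- A squarefree monomial ideal `I` is geometrically vertex decomposable if it is unmixed
and either (1) `I = ⟨1⟩` or `I` is generated by a subset of the variables, or (2) there is
a set of squarefree monomial generators of `I` and a variable `y` such that
`I = C_{y,I} ∩ (N_{y,I} + ⟨y⟩)` and both `C_{y,I}` and `N_{y,I}` are geometrically vertex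
decomposable in the polynomial ring omitting the variable `y`. -/
inductive IsGVD (k : Type) [Field k] : (σ : Type) → Ideal (MvPolynomial σ k) → Prop where
  | base (σ : Type) (I : Ideal (MvPolynomial σ k)) (hunm : UnmixedIdeal I)
      (h : I = ⊤ ∨ ∃ W : Set σ, I = Ideal.span (MvPolynomial.X '' W)) : IsGVD k σ I
  | step (σ : Type) (I : Ideal (MvPolynomial σ k)) (hunm : UnmixedIdeal I)
      (F : Set (Finset σ)) (hgen : I = sqSpan k F) (y : σ)
      (hdec : I = sqSpan k (CFam y F) ⊓ (sqSpan k (NFam y F) ⊔ Ideal.span {MvPolynomial.X y}))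
      (hC : IsGVD k {x : σ // x ≠ y} (sqSpan k (dropVar y '' CFam y F)))
      (hN : IsGVD k {x : σ // x ≠ y} (sqSpan k (dropVar y '' NFam y F))) :
      IsGVD k σ I

end GVDDefs

section ONIDefs

variable {V : Type} [Fintype V]

/-- The open neighborhood of a vertex, as a finset. -/
noncomputable def nbrFinset (G : SimpleGraph V) (v : V) : Finset V :=
  (Set.toFinite (G.neighborSet v)).toFinset

/-- The odd-open neighborhood ideal of a (balanced) graph: generated by the monomials
`X_{N(v)}` for the vertices `v` of odd height. -/
noncomputable def oddONI (k : Type) [Field k] (G : SimpleGraph V) : Ideal (MvPolynomial V k) :=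
  sqSpan k {s | ∃ v : V, Odd (heightVx G v) ∧ s = nbrFinset G v}

end ONIDefs

section AlgebraCore

open MvPolynomial

variable {k : Type} [Field k] {σ : Type}

/-- The exponent vector of the squarefree monomial with support `s`. -/
noncomputable def ind (s : Finset σ) : σ →₀ ℕ := ∑ i ∈ s, Finsupp.single i 1

lemma ind_apply (s : Finset σ) (j : σ) : ind s j = if j ∈ s then 1 else 0 := by
  classical
  rw [ind, Finset.sum_apply']
  simp only [Finsupp.single_apply]
  rw [Finset.sum_ite_eq' s j (fun _ => 1)]

lemma sqMono_eq (s : Finset σ) : sqMono k s = monomial (ind s) (1 : k) := by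
  classical
  induction s using Finset.cons_induction with
  | empty => simp [sqMono, ind]
  | cons a s ha ih =>
    have h1 : sqMono k (Finset.cons a s ha) = X a * sqMono k s := by
      rw [sqMono, Finset.prod_cons]; rfl
    have h2 : ind (Finset.cons a s ha) = Finsupp.single a 1 + ind s := by
      rw [ind, Finset.sum_cons]; rfl
    rw [h1, ih, h2, X, monomial_mul, one_mul]

lemma sqSpan_eq (F : Set (Finset σ)) :
    sqSpan k F = Ideal.span ((fun d => monomial d (1 : k)) '' (ind '' F)) := by
  unfold sqSpan
  congr 1
  ext m
  constructor
  · rintro ⟨s, hs, rfl⟩; exact ⟨ind s, ⟨s, hs, rfl⟩, (sqMono_eq s).symm⟩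
  · rintro ⟨d, ⟨s, hs, rfl⟩, rfl⟩; exact ⟨s, hs, (sqMono_eq s).symm⟩

lemma mem_sqSpan {F : Set (Finset σ)} {f : MvPolynomial σ k} :
    f ∈ sqSpan k F ↔ ∀ ξ ∈ f.support, ∃ s ∈ F, ind s ≤ ξ := by
  rw [sqSpan_eq, mem_ideal_span_monomial_image]
  constructor
  · intro h ξ hξ
    obtain ⟨d, ⟨s, hs, rfl⟩, hle⟩ := h ξ hξ
    exact ⟨s, hs, hle⟩
  · intro h ξ hξ
    obtain ⟨s, hs, hle⟩ := h ξ hξ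
    exact ⟨ind s, ⟨s, hs, rfl⟩, hle⟩

lemma sqMono_mem {F : Set (Finset σ)} {s : Finset σ} (hs : s ∈ F) :
    sqMono k s ∈ sqSpan k F :=
  Ideal.subset_span ⟨s, hs, rfl⟩

lemma sqSpan_mono {F₁ F₂ : Set (Finset σ)} (h : F₁ ⊆ F₂) :
    sqSpan k F₁ ≤ sqSpan k F₂ := by
  apply Ideal.span_mono
  rintro m ⟨s, hs, rfl⟩
  exact ⟨s, h hs, rfl⟩

lemma sqSpan_empty_mem {F : Set (Finset σ)} (h : (∅ : Finset σ) ∈ F) :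
    sqSpan k F = ⊤ := by
  rw [Ideal.eq_top_iff_one]
  have := sqMono_mem (k := k) h
  simpa [sqMono] using this

/-- Eliminate the variables in `W`. -/
noncomputable def elimMap (W : Set σ) : MvPolynomial σ k →ₐ[k] MvPolynomial σ k :=
  aeval (fun i => if i ∈ W then 0 else X i)

lemma sub_elim_mem (W : Set σ) (f : MvPolynomial σ k) :
    f - elimMap (k := k) W f ∈ Ideal.span (X '' W) := by
  classical
  induction f using MvPolynomial.induction_on with
  | C a => simp [elimMap]
  | add p q hp hq =>
    have : p + q - elimMap (k := k) W (p + q)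
        = (p - elimMap (k := k) W p) + (q - elimMap (k := k) W q) := by
      rw [map_add]; ring
    rw [this]; exact add_mem hp hq
  | mul_X p i hp =>
    rw [map_mul]
    by_cases hi : i ∈ W
    · have hXi : (X i : MvPolynomial σ k) ∈ Ideal.span (X '' W) :=
        Ideal.subset_span ⟨i, hi, rfl⟩
      have he : elimMap (k := k) W (X i) = 0 := by simp [elimMap, hi]
      rw [he, mul_zero, sub_zero]
      exact Ideal.mul_mem_left _ _ hXi
    · have he : elimMap (k := k) W (X i) = X i := by simp [elimMap, hi]
      rw [he]
      have : p * X i - elimMap (k := k) W p * X i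
          = (p - elimMap (k := k) W p) * X i := by ring
      rw [this]
      exact Ideal.mul_mem_right _ _ hp

lemma varSpan_eq_ker (W : Set σ) :
    Ideal.span (X '' W : Set (MvPolynomial σ k))
      = RingHom.ker (elimMap (k := k) W).toRingHom := by
  apply le_antisymm
  · rw [Ideal.span_le]
    rintro _ ⟨i, hi, rfl⟩
    simp [RingHom.mem_ker, elimMap, hi]
  · intro f hf
    have h0 : elimMap (k := k) W f = 0 := hf
    have := sub_elim_mem (k := k) W f
    rwa [h0, sub_zero] at this

lemma varSpan_prime (W : Set σ) :
    (Ideal.span (X '' W : Set (MvPolynomial σ k))).IsPrime := by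
  rw [varSpan_eq_ker]
  exact RingHom.ker_isPrime _

lemma X_mem_varSpan_iff {W : Set σ} {i : σ} :
    (X i : MvPolynomial σ k) ∈ Ideal.span (X '' W) ↔ i ∈ W := by
  constructor
  · intro h
    by_contra hi
    rw [varSpan_eq_ker] at h
    have h0 : elimMap (k := k) W (X i) = 0 := h
    rw [show elimMap (k := k) W (X i) = X i by simp [elimMap, hi]] at h0
    exact X_ne_zero i h0
  · exact fun h => Ideal.subset_span ⟨i, h, rfl⟩

end AlgebraCore

section CoverCore

open MvPolynomial

variable {k : Type} [Field k] {σ : Type}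

/-- `W` is a vertex cover of the hypergraph `F`. -/
def Cov (F : Set (Finset σ)) (W : Set σ) : Prop := ∀ s ∈ F, ∃ x ∈ W, x ∈ s

/-- `W` is a minimal vertex cover of `F`. -/
def MinCov (F : Set (Finset σ)) (W : Set σ) : Prop :=
  Cov F W ∧ ∀ W' ⊂ W, ¬ Cov F W'

lemma Cov.mono {F : Set (Finset σ)} {W W' : Set σ} (h : Cov F W) (hW : W ⊆ W') :
    Cov F W' := fun s hs => by
  obtain ⟨x, hx, hxs⟩ := h s hs
  exact ⟨x, hW hx, hxs⟩

lemma sqSpan_le_varSpan {F : Set (Finset σ)} {W : Set σ} (h : Cov F W) :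
    sqSpan k F ≤ Ideal.span (X '' W) := by
  rw [sqSpan]
  rw [Ideal.span_le]
  rintro _ ⟨s, hs, rfl⟩
  obtain ⟨x, hxW, hxs⟩ := h s hs
  have : sqMono k s = X x * ∏ i ∈ s.erase x, X i := by
    rw [sqMono, Finset.mul_prod_erase _ _ hxs]
  rw [this]
  exact Ideal.mul_mem_right _ _ (Ideal.subset_span ⟨x, hxW, rfl⟩)

/-- every minimal prime of a squarefree monomial ideal is the span of the
variables in a minimal cover. -/
lemma minimalPrimes_sqSpan {F : Set (Finset σ)} {P : Ideal (MvPolynomial σ k)}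
    (hP : P ∈ (sqSpan k F).minimalPrimes) :
    ∃ W : Set σ, P = Ideal.span (X '' W) ∧ MinCov F W := by
  classical
  obtain ⟨⟨hPp, hIP⟩, hmin⟩ := hP
  set W : Set σ := {i | X i ∈ P} with hW
  have hWP : Ideal.span (X '' W : Set (MvPolynomial σ k)) ≤ P := by
    rw [Ideal.span_le]; rintro _ ⟨i, hi, rfl⟩; exact hi
  have hcov : Cov F W := by
    intro s hs
    have hmem : sqMono k s ∈ P := hIP (sqMono_mem hs)
    rw [sqMono] at hmem
    rw [Ideal.IsPrime.prod_mem_iff] at hmem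
    obtain ⟨i, his, hiP⟩ := hmem
    exact ⟨i, hiP, his⟩
  have hIW : sqSpan k F ≤ Ideal.span (X '' W) := sqSpan_le_varSpan hcov
  have hPW : P ≤ Ideal.span (X '' W) := hmin ⟨varSpan_prime W, hIW⟩ hWP
  have hPeq : P = Ideal.span (X '' W) := le_antisymm hPW hWP
  refine ⟨W, hPeq, hcov, ?_⟩
  intro W' hW' hcov'
  have hle : Ideal.span (X '' W' : Set (MvPolynomial σ k)) ≤ P := by
    rw [hPeq]
    exact Ideal.span_mono (Set.image_mono hW'.subset)
  have := hmin ⟨varSpan_prime W', sqSpan_le_varSpan hcov'⟩ hle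
  obtain ⟨i, hiW, hiW'⟩ := Set.exists_of_ssubset hW'
  have : (X i : MvPolynomial σ k) ∈ Ideal.span (X '' W') := by
    apply this
    rw [hPeq]
    exact Ideal.subset_span ⟨i, hiW, rfl⟩
  exact hiW' (X_mem_varSpan_iff.mp this)

lemma minimalPrimes_top_empty {R : Type*} [CommRing R] :
    (⊤ : Ideal R).minimalPrimes = ∅ := by
  ext P
  simp only [Set.mem_empty_iff_false, iff_false]
  rintro ⟨⟨hp, hle⟩, -⟩
  exact hp.ne_top (top_le_iff.mp hle)

/-- permuting variables by an equivalence sending `A` onto `B`. -/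
lemma exists_perm_image [Fintype σ] {A B : Set σ} (h : A.ncard = B.ncard) :
    ∃ e : σ ≃ σ, e '' A = B := by
  classical
  have hA : Fintype.card A = Fintype.card B := by
    rwa [Set.ncard_eq_toFinset_card', Set.ncard_eq_toFinset_card',
      Set.toFinset_card, Set.toFinset_card] at h
  have hAc : Fintype.card (↥Aᶜ) = Fintype.card (↥Bᶜ) := by
    rw [Fintype.card_compl_set, Fintype.card_compl_set, hA]
  obtain ⟨eA⟩ := Fintype.card_eq.mp hA
  obtain ⟨eC⟩ := Fintype.card_eq.mp hAc
  refine ⟨(Equiv.Set.sumCompl A).symm.trans ((eA.sumCongr eC).trans (Equiv.Set.sumCompl B)), ?_⟩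
  ext y
  constructor
  · rintro ⟨x, hx, rfl⟩
    simp only [Equiv.trans_apply]
    rw [Equiv.Set.sumCompl_symm_apply_of_mem hx]
    simp only [Equiv.sumCongr_apply, Sum.map_inl, Equiv.Set.sumCompl_apply_inl]
    exact (eA ⟨x, hx⟩).2
  · intro hy
    refine ⟨(Equiv.Set.sumCompl A) (Sum.inl (eA.symm ⟨y, hy⟩)), (eA.symm ⟨y, hy⟩).2, ?_⟩
    simp only [Equiv.trans_apply, Equiv.Set.sumCompl_apply_inl]
    rw [Equiv.Set.sumCompl_symm_apply_of_mem (eA.symm ⟨y, hy⟩).2]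
    simp

/-- heights of primes are preserved by ring automorphisms. -/
lemma primeHt_eq_of_ringEquiv {R : Type*} [CommRing R] (e : R ≃+* R)
    {P Q : Ideal R} (hP : P.IsPrime) (hQ : Q.IsPrime) (h : P = Q.comap e) :
    primeHt P hP = primeHt Q hQ := by
  let ψ : PrimeSpectrum R ≃o PrimeSpectrum R :=
    { toFun := fun x => ⟨x.asIdeal.comap e, x.2.comap _⟩
      invFun := fun x => ⟨x.asIdeal.comap e.symm, x.2.comap _⟩
      left_inv := by
        intro x
        ext1
        ext r
        simp only [Ideal.mem_comap]
        rw [RingEquiv.apply_symm_apply]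
      right_inv := by
        intro x
        ext1
        ext r
        simp only [Ideal.mem_comap]
        rw [RingEquiv.symm_apply_apply]
      map_rel_iff' := by
        intro x y
        constructor
        · intro hxy r hr
          have h1 : e.symm r ∈ x.asIdeal.comap e := by
            rw [Ideal.mem_comap, RingEquiv.apply_symm_apply]
            exact hr
          have h2 := hxy h1
          simp only [Equiv.coe_fn_mk] at h2
          rw [Ideal.mem_comap, RingEquiv.apply_symm_apply] at h2
          exact h2
        · intro hxy r hr
          exact hxy hr }
  have hst : ∀ (f : PrimeSpectrum R ≃o PrimeSpectrum R) (x : PrimeSpectrum R),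
      Order.height x ≤ Order.height (f x) :=
    fun f x => Order.height_le_height_apply_of_strictMono f f.strictMono x
  have key : Order.height (⟨Q, hQ⟩ : PrimeSpectrum R) = Order.height (⟨P, hP⟩ : PrimeSpectrum R) := by
    have h1 := hst ψ ⟨Q, hQ⟩
    have h2 := hst ψ.symm (ψ ⟨Q, hQ⟩)
    rw [ψ.symm_apply_apply] at h2
    have hψQ : ψ ⟨Q, hQ⟩ = ⟨P, hP⟩ := by
      apply PrimeSpectrum.ext
      exact h.symm
    rw [hψQ] at h1 h2
    exact le_antisymm h1 h2
  unfold primeHt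
  exact key.symm

lemma unmixed_of_minCov_ncard [Fintype σ] {F : Set (Finset σ)} {κ : ℕ}
    (h : ∀ W : Set σ, MinCov F W → W.ncard = κ) :
    UnmixedIdeal (sqSpan k F) := by
  intro P Q hP hQ
  obtain ⟨W₁, hPeq, hW₁⟩ := minimalPrimes_sqSpan hP
  obtain ⟨W₂, hQeq, hW₂⟩ := minimalPrimes_sqSpan hQ
  have hcard : W₁.ncard = W₂.ncard := by rw [h W₁ hW₁, h W₂ hW₂]
  obtain ⟨e, he⟩ := exists_perm_image hcard
  have hsymm : e.symm '' W₂ = W₁ := by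
    rw [← he, Equiv.symm_image_image]
  let ε : MvPolynomial σ k ≃+* MvPolynomial σ k := (renameEquiv k e).toRingEquiv
  have hcomap : Ideal.span (X '' W₁ : Set (MvPolynomial σ k))
      = (Ideal.span (X '' W₂ : Set (MvPolynomial σ k))).comap ε := by
    rw [← Ideal.map_symm]
    rw [Ideal.map_span]
    congr 1
    ext m
    constructor
    · rintro ⟨i, hi, rfl⟩
      rw [← hsymm] at hi
      obtain ⟨j, hj, rfl⟩ := hi
      refine ⟨X j, ⟨j, hj, rfl⟩, ?_⟩
      show (renameEquiv k e).symm (X j) = X (e.symm j)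
      rw [renameEquiv_symm]
      simp [renameEquiv]
    · rintro ⟨_, ⟨j, hj, rfl⟩, rfl⟩
      refine ⟨e.symm j, hsymm ▸ ⟨j, hj, rfl⟩, ?_⟩
      show X (e.symm j) = (renameEquiv k e).symm (X j)
      rw [renameEquiv_symm]
      simp [renameEquiv]
  subst hPeq hQeq
  exact primeHt_eq_of_ringEquiv ε _ _ hcomap

end CoverCore

section DecompCore

open MvPolynomial

variable {k : Type} [Field k] {σ : Type}

lemma NFam_subset_CFam (y : σ) (F : Set (Finset σ)) : NFam y F ⊆ CFam y F := by
  rintro s ⟨hs, hys⟩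
  exact ⟨s, hs, Finset.erase_eq_of_notMem hys⟩

lemma NFam_subset (y : σ) (F : Set (Finset σ)) : NFam y F ⊆ F := fun _ hs => hs.1

lemma mem_span_X_singleton {y : σ} {f : MvPolynomial σ k} :
    f ∈ Ideal.span {(X y : MvPolynomial σ k)} ↔
      ∀ ξ ∈ f.support, Finsupp.single y 1 ≤ ξ := by
  have hset : ({(X y : MvPolynomial σ k)} : Set _)
      = (fun d => monomial d (1 : k)) '' {Finsupp.single y 1} := by
    rw [Set.image_singleton]
    rfl
  rw [hset, mem_ideal_span_monomial_image]
  simp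

lemma sqMono_eq_mul_erase {s : Finset σ} {y : σ} (hy : y ∈ s) :
    sqMono k s = X y * sqMono k (s.erase y) := by
  rw [sqMono, sqMono, Finset.mul_prod_erase _ _ hy]

lemma ind_erase_le {s : Finset σ} {y : σ} {ξ : σ →₀ ℕ}
    (h1 : ind (s.erase y) ≤ ξ) (h2 : Finsupp.single y 1 ≤ ξ) : ind s ≤ ξ := by
  classical
  intro j
  by_cases hj : j = y
  · subst hj
    have ha : ind s j ≤ 1 := by rw [ind_apply]; split <;> simp
    have hb : 1 ≤ ξ j := by
      have := h2 j
      simpa [Finsupp.single_apply] using this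
    omega
  · have he : ind s j = ind (s.erase y) j := by
      rw [ind_apply, ind_apply]
      simp [Finset.mem_erase, hj]
    rw [he]
    exact h1 j

/-- The generic one-step geometric vertex decomposition for squarefree
monomial ideals. -/
lemma sqSpan_decomp (F : Set (Finset σ)) (y : σ) :
    sqSpan k F = sqSpan k (CFam y F) ⊓ (sqSpan k (NFam y F) ⊔ Ideal.span {X y}) := by
  classical
  apply le_antisymm
  · apply le_inf
    · rw [sqSpan, Ideal.span_le]
      rintro _ ⟨s, hs, rfl⟩
      by_cases hy : y ∈ s
      · rw [sqMono_eq_mul_erase hy]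
        exact Ideal.mul_mem_left _ _ (sqMono_mem ⟨s, hs, rfl⟩)
      · exact sqMono_mem ⟨s, hs, Finset.erase_eq_of_notMem hy⟩
    · rw [sqSpan, Ideal.span_le]
      rintro _ ⟨s, hs, rfl⟩
      by_cases hy : y ∈ s
      · apply Ideal.mem_sup_right
        rw [sqMono_eq_mul_erase hy]
        exact Ideal.mul_mem_right _ _ (Ideal.subset_span rfl)
      · exact Ideal.mem_sup_left (sqMono_mem ⟨hs, hy⟩)
  · intro f hf
    obtain ⟨hfC', hfN'⟩ := hf
    have hfC : f ∈ sqSpan k (CFam y F) := hfC'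
    have hfN : f ∈ sqSpan k (NFam y F) ⊔ Ideal.span {X y} := hfN'
    rw [Submodule.mem_sup] at hfN
    obtain ⟨g, hg, h, hh, hsum⟩ := hfN
    have hgI : g ∈ sqSpan k F := sqSpan_mono (NFam_subset y F) hg
    have hgC : g ∈ sqSpan k (CFam y F) := sqSpan_mono (NFam_subset_CFam y F) hg
    have hhC : h ∈ sqSpan k (CFam y F) := by
      have he : h = f - g := by rw [← hsum]; ring
      rw [he]; exact sub_mem hfC hgC
    have hhy := mem_span_X_singleton.mp hh
    have hhI : h ∈ sqSpan k F := by
      rw [mem_sqSpan] at hhC ⊢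
      intro ξ hξ
      obtain ⟨s', hs', hle⟩ := hhC ξ hξ
      obtain ⟨s, hs, rfl⟩ := hs'
      exact ⟨s, hs, ind_erase_le hle (hhy ξ hξ)⟩
    rw [← hsum]
    exact add_mem hgI hhI

lemma unmixedIdeal_top {R : Type*} [CommRing R] : UnmixedIdeal (⊤ : Ideal R) := by
  intro P Q hP hQ
  rw [minimalPrimes_top_empty] at hP
  exact absurd hP (Set.notMem_empty _)

lemma unmixedIdeal_of_isPrime {R : Type*} [CommRing R] {I : Ideal R} (hI : I.IsPrime) :
    UnmixedIdeal I := by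
  intro P Q hP hQ
  haveI := hI
  rw [Ideal.minimalPrimes_eq_subsingleton_self] at hP hQ
  rw [Set.mem_singleton_iff] at hP hQ
  subst hP; subst hQ
  rfl

end DecompCore

section CoverTransfer

variable {σ : Type}

lemma MinCov.mem_union {F : Set (Finset σ)} {W : Set σ} (h : MinCov F W) :
    ∀ x ∈ W, ∃ s ∈ F, x ∈ s := by
  intro x hx
  by_contra hc
  push_neg at hc
  apply h.2 (W \ {x}) (Set.sdiff_singleton_ssubset.mpr hx)
  intro s hs
  obtain ⟨z, hz, hzs⟩ := h.1 s hs
  refine ⟨z, ⟨hz, fun he => ?_⟩, hzs⟩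
  rw [Set.mem_singleton_iff] at he
  exact hc s hs (he ▸ hzs)

lemma minCov_CFam {F : Set (Finset σ)} {y : σ} {W : Set σ}
    (h : MinCov (CFam y F) W) : MinCov F W := by
  have hyW : y ∉ W := by
    intro hy
    obtain ⟨s, hs, hys⟩ := h.mem_union y hy
    obtain ⟨t, _, rfl⟩ := hs
    exact (Finset.notMem_erase y t) hys
  constructor
  · intro s hs
    obtain ⟨x, hx, hxs⟩ := h.1 (s.erase y) ⟨s, hs, rfl⟩
    exact ⟨x, hx, Finset.mem_of_mem_erase hxs⟩
  · intro W' hW' hcov'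
    apply h.2 W' hW'
    rintro _ ⟨s, hs, rfl⟩
    obtain ⟨x, hx, hxs⟩ := hcov' s hs
    have hxy : x ≠ y := fun he => hyW (he ▸ hW'.subset hx)
    exact ⟨x, hx, Finset.mem_erase.mpr ⟨hxy, hxs⟩⟩

lemma minCov_NFam {F : Set (Finset σ)} {y : σ} {W : Set σ} {sv : Finset σ}
    (hs : sv ∈ F) (hy : y ∈ sv)
    (hgood : ∀ t ∈ F, y ∉ t → ∀ x ∈ t, x ∉ sv.erase y)
    (h : MinCov (NFam y F) W) : y ∉ W ∧ MinCov F (insert y W) := by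
  have hyW : y ∉ W := by
    intro hyW
    obtain ⟨t, ht, hyt⟩ := h.mem_union y hyW
    exact ht.2 hyt
  have hWs : ∀ x ∈ W, x ∉ sv := by
    intro x hx hxs
    obtain ⟨t, ht, hxt⟩ := h.mem_union x hx
    by_cases hxy : x = y
    · exact ht.2 (hxy ▸ hxt)
    · exact hgood t ht.1 ht.2 x hxt (Finset.mem_erase.mpr ⟨hxy, hxs⟩)
  refine ⟨hyW, ?_, ?_⟩
  · intro s hsF
    by_cases hys : y ∈ s
    · exact ⟨y, Set.mem_insert y W, hys⟩
    · obtain ⟨x, hx, hxs⟩ := h.1 s ⟨hsF, hys⟩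
      exact ⟨x, Set.mem_insert_of_mem _ hx, hxs⟩
  · intro W' hW' hcov'
    by_cases hyW' : y ∈ W'
    · have hsubset : W' \ {y} ⊆ W := by
        intro z hz
        rcases hW'.subset hz.1 with rfl | hzW
        · exact absurd rfl hz.2
        · exact hzW
      have hne : W' \ {y} ≠ W := by
        intro he
        apply hW'.ne
        have h1 : insert y (W' \ {y}) = W' := by
          rw [Set.insert_diff_singleton, Set.insert_eq_self.mpr hyW']
        rw [← h1, he]
      apply h.2 (W' \ {y}) (HasSubset.Subset.ssubset_of_ne hsubset hne)
      intro t ht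
      obtain ⟨x, hx, hxt⟩ := hcov' t (NFam_subset y F ht)
      have hxy : x ≠ y := fun he => ht.2 (he ▸ hxt)
      exact ⟨x, ⟨hx, by simpa using hxy⟩, hxt⟩
    · obtain ⟨x, hx, hxs⟩ := hcov' sv hs
      have hxW : x ∈ W := by
        rcases hW'.subset hx with rfl | hxW
        · exact absurd hx hyW'
        · exact hxW
      exact hWs x hxW hxs

end CoverTransfer

section CoverMore

variable {σ : Type}

lemma minCov_empty_family {W : Set σ} (h : MinCov (∅ : Set (Finset σ)) W) : W = ∅ := by
  by_contra hne
  exact h.2 ∅ (Set.empty_ssubset.mpr (Set.nonempty_iff_ne_empty.mpr hne))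
    (fun s hs => absurd hs (Set.notMem_empty s))

lemma exists_minCov_le [Fintype σ] {F : Set (Finset σ)} :
    ∀ (n : ℕ) (W : Set σ), W.ncard ≤ n → Cov F W → ∃ W', W' ⊆ W ∧ MinCov F W' := by
  intro n
  induction n with
  | zero =>
    intro W hW hc
    have hWe : W = ∅ := (Set.ncard_eq_zero (Set.toFinite W)).mp (Nat.le_zero.mp hW)
    refine ⟨W, subset_rfl, hc, ?_⟩
    intro W' hW'
    rw [hWe] at hW'
    exact fun _ => hW'.ne (Set.subset_empty_iff.mp hW'.subset)
  | succ n ih =>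
    intro W hW hc
    by_cases hmin : ∀ W' ⊂ W, ¬ Cov F W'
    · exact ⟨W, subset_rfl, hc, hmin⟩
    · push_neg at hmin
      obtain ⟨W', hW', hc'⟩ := hmin
      have hlt : W'.ncard ≤ n := by
        have := Set.ncard_lt_ncard hW' (Set.toFinite W)
        omega
      obtain ⟨W'', h1, h2⟩ := ih W' hlt hc'
      exact ⟨W'', h1.trans hW'.subset, h2⟩

lemma mem_dropVar_iff {y : σ} {s : Finset σ} {x : {z : σ // z ≠ y}} :
    x ∈ dropVar y s ↔ x.val ∈ s := Finset.mem_subtype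

lemma minCov_dropVar {y : σ} {F : Set (Finset σ)} (hF : ∀ s ∈ F, y ∉ s)
    {W : Set {z : σ // z ≠ y}} (h : MinCov ((dropVar y) '' F) W) :
    MinCov F (Subtype.val '' W) := by
  constructor
  · intro s hs
    obtain ⟨x, hx, hxs⟩ := h.1 (dropVar y s) ⟨s, hs, rfl⟩
    exact ⟨x.val, ⟨x, hx, rfl⟩, mem_dropVar_iff.mp hxs⟩
  · intro W0 hW0 hcov0
    set W0' : Set {z : σ // z ≠ y} := {x | x.val ∈ W0} with hW0'
    have himg : Subtype.val '' W0' = W0 := by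
      ext z
      constructor
      · rintro ⟨x, hx, rfl⟩; exact hx
      · intro hz
        have hzy : z ≠ y := by
          rintro rfl
          obtain ⟨x, -, hx⟩ := hW0.subset hz
          exact x.2 hx
        exact ⟨⟨z, hzy⟩, hz, rfl⟩
    have hsub : W0' ⊆ W := by
      intro x hx
      obtain ⟨x', hx', he⟩ := hW0.subset hx
      rwa [show x' = x from Subtype.val_injective he] at hx'
    have hne : W0' ≠ W := by
      intro he
      apply hW0.ne
      rw [← himg, he]
    apply h.2 W0' (hsub.ssubset_of_ne hne)
    rintro _ ⟨s, hsF, rfl⟩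
    obtain ⟨z, hz, hzs⟩ := hcov0 s hsF
    have hzy : z ≠ y := fun he => hF s hsF (he ▸ hzs)
    exact ⟨⟨z, hzy⟩, hz, mem_dropVar_iff.mpr hzs⟩

end CoverMore

section GraphCore

open SimpleGraph

variable {V : Type} {G : SimpleGraph V}

lemma walk_parity {O : Set V} (hcol : ∀ u w, G.Adj u w → (u ∈ O ↔ w ∉ O)) :
    ∀ {a b : V} (p : G.Walk a b), ((a ∈ O) ↔ (b ∈ O)) ↔ Even p.length := by
  intro a b p
  induction p with
  | nil => simp
  | @cons u v w h q ih =>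
    rw [SimpleGraph.Walk.length_cons, Nat.even_add_one, ← ih]
    have := hcol u v h
    tauto

lemma dist_parity {O : Set V} (hcol : ∀ u w, G.Adj u w → (u ∈ O ↔ w ∉ O))
    {a b : V} (h : G.Reachable a b) :
    ((a ∈ O) ↔ (b ∈ O)) ↔ Even (G.dist a b) := by
  obtain ⟨p, hp⟩ := h.exists_walk_length_eq_dist
  rw [← hp]
  exact walk_parity hcol p

lemma dist_le_add_one_of_adj {r u w : V} (h : G.Adj u w) (hr : G.Reachable r u) :
    G.dist r w ≤ G.dist r u + 1 := by
  obtain ⟨p, hp⟩ := hr.exists_walk_length_eq_dist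
  calc G.dist r w ≤ (p.concat h).length := SimpleGraph.dist_le _
    _ = G.dist r u + 1 := by rw [SimpleGraph.Walk.length_concat, hp]

/-- In an acyclic graph, a vertex has at most one neighbour strictly closer
to a fixed root. -/
lemma closer_nbr_unique (hac : G.IsAcyclic) {r c z₁ z₂ : V} {n : ℕ}
    (hd : G.dist r c = n + 1)
    (h1 : G.Adj z₁ c) (h2 : G.Adj z₂ c)
    (hr1 : G.Reachable r z₁) (hr2 : G.Reachable r z₂)
    (hd1 : G.dist r z₁ = n) (hd2 : G.dist r z₂ = n) : z₁ = z₂ := by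
  obtain ⟨w₁, hw₁⟩ := hr1.exists_walk_length_eq_dist
  obtain ⟨w₂, hw₂⟩ := hr2.exists_walk_length_eq_dist
  have key : ∀ (z : V) (hz : G.Adj z c) (w : G.Walk r z), w.length = n → G.dist r z = n →
      ∃ q : G.Walk c r, q.IsPath ∧ q.getVert 1 = z := by
    intro z hz w hw hdz
    have hbl : w.bypass.length = n := by
      have hle := SimpleGraph.Walk.length_bypass_le w
      have hge := SimpleGraph.dist_le (w.bypass)
      rw [hdz] at hge
      omega
    have hcs : c ∉ w.bypass.support := by
      intro hcsup
      have := SimpleGraph.Walk.length_takeUntil_le w.bypass hcsup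
      have hge := SimpleGraph.dist_le (w.bypass.takeUntil c hcsup)
      omega
    refine ⟨SimpleGraph.Walk.cons hz.symm w.bypass.reverse, ?_, ?_⟩
    · rw [SimpleGraph.Walk.cons_isPath_iff]
      constructor
      · exact (SimpleGraph.Walk.bypass_isPath w).reverse
      · rwa [SimpleGraph.Walk.support_reverse, List.mem_reverse]
    · exact (SimpleGraph.Walk.getVert_cons_succ (n := 0) _ _).trans (SimpleGraph.Walk.getVert_zero _)
  obtain ⟨q₁, hq₁, hg₁⟩ := key z₁ h1 w₁ (hw₁.trans hd1) hd1
  obtain ⟨q₂, hq₂, hg₂⟩ := key z₂ h2 w₂ (hw₂.trans hd2) hd2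
  have := hac.path_unique ⟨q₁, hq₁⟩ ⟨q₂, hq₂⟩
  have hval : q₁ = q₂ := congrArg Subtype.val this
  rw [← hg₁, ← hg₂, hval]

lemma exists_closer_nbr {r v : V} (hr : G.Reachable r v) (hd : 1 ≤ G.dist r v) :
    ∃ y, G.Adj v y ∧ G.dist r y = G.dist r v - 1 := by
  obtain ⟨p, hp⟩ := hr.exists_walk_length_eq_dist
  have hrev : p.reverse.length = G.dist r v := by
    rw [SimpleGraph.Walk.length_reverse, hp]
  cases hq : p.reverse with
  | nil =>
    rw [hq] at hrev
    simp only [SimpleGraph.Walk.length_nil] at hrev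
    omega
  | @cons _ y _ h q =>
    have hlen : q.length = G.dist r v - 1 := by
      rw [hq] at hrev
      rw [SimpleGraph.Walk.length_cons] at hrev
      omega
    refine ⟨y, h, ?_⟩
    have hle : G.dist r y ≤ G.dist r v - 1 := by
      have := SimpleGraph.dist_le q.reverse
      rwa [SimpleGraph.Walk.length_reverse, hlen] at this
    have hge : G.dist r v ≤ G.dist r y + 1 := dist_le_add_one_of_adj h.symm ⟨q.reverse⟩
    omega

end GraphCore

section GoodPair

open SimpleGraph

variable {V : Type}

lemma exists_good_pair [Fintype V] {G : SimpleGraph V} (hac : G.IsAcyclic) {O : Set V}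
    (hcol : ∀ u w, G.Adj u w → (u ∈ O ↔ w ∉ O)) {v₀ : V} (hv₀ : v₀ ∈ O)
    (hnbr : ∀ v ∈ O, ∃ u, G.Adj v u) :
    ∃ v ∈ O, ∃ y, G.Adj v y ∧ ∀ c, G.Adj v c → c ≠ y → ∀ z, G.Adj c z → z = v := by
  classical
  set A : Finset V := Finset.univ.filter (fun u => u ∈ O ∧ G.Reachable v₀ u) with hA
  have hAne : A.Nonempty := ⟨v₀, Finset.mem_filter.mpr ⟨Finset.mem_univ _, hv₀, SimpleGraph.Reachable.refl v₀⟩⟩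
  obtain ⟨v, hvA, hvmax⟩ := Finset.exists_max_image A (fun u => G.dist v₀ u) hAne
  simp only [hA, Finset.mem_filter, Finset.mem_univ, true_and] at hvA
  obtain ⟨hvO, hvreach⟩ := hvA
  set D := G.dist v₀ v with hD
  have hmax : ∀ u ∈ O, G.Reachable v₀ u → G.dist v₀ u ≤ D := by
    intro u hu hr
    exact hvmax u (by simp [hA, hu, hr])
  have hparity : ∀ u, G.Reachable v₀ u → (Even (G.dist v₀ u) ↔ u ∈ O) := by
    intro u hr
    rw [← dist_parity hcol hr]
    tauto
  have hDeven : Even D := (hparity v hvreach).mpr hvO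
  by_cases hD0 : D = 0
  · obtain ⟨y, hy⟩ := hnbr v hvO
    refine ⟨v, hvO, y, hy, ?_⟩
    intro c hc hcy z hz
    have hcO : c ∉ O := (hcol v c hc).mp hvO
    have hzO : z ∈ O := by have := hcol c z hz; tauto
    have hzr : G.Reachable v₀ z := (hvreach.trans hc.reachable).trans hz.reachable
    have hle := hmax z hzO hzr
    have hz0 : v₀ = z := hzr.dist_eq_zero_iff.mp (by omega)
    have hv0 : v₀ = v := hvreach.dist_eq_zero_iff.mp (by omega)
    rw [← hz0, hv0]
  · obtain ⟨y, hyadj, hyd⟩ := exists_closer_nbr hvreach (by omega)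
    refine ⟨v, hvO, y, hyadj, ?_⟩
    intro c hc hcy z hz
    have hcO : c ∉ O := (hcol v c hc).mp hvO
    have hcr : G.Reachable v₀ c := hvreach.trans hc.reachable
    have hcodd : ¬ Even (G.dist v₀ c) := fun he => hcO ((hparity c hcr).mp he)
    have hcle : G.dist v₀ c ≤ D + 1 := dist_le_add_one_of_adj hc hvreach
    have hcge : D ≤ G.dist v₀ c + 1 := dist_le_add_one_of_adj hc.symm hcr
    have hcd : G.dist v₀ c = D - 1 ∨ G.dist v₀ c = D + 1 := by
      rcases hDeven with ⟨m, hm⟩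
      rcases Nat.even_or_odd (G.dist v₀ c) with he | ho
      · exact absurd he hcodd
      · rcases ho with ⟨j, hj⟩
        omega
    rcases hcd with hcd | hcd
    · exfalso
      apply hcy
      exact closer_nbr_unique hac (show G.dist v₀ v = (D - 1) + 1 by omega)
        hc.symm hyadj.symm hcr (hvreach.trans hyadj.reachable) hcd (by omega)
    · have hzr : G.Reachable v₀ z := hcr.trans hz.reachable
      have hzO : z ∈ O := by have := hcol c z hz; tauto
      have hzle := hmax z hzO hzr
      have hge : G.dist v₀ c ≤ G.dist v₀ z + 1 := dist_le_add_one_of_adj hz.symm hzr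
      have hzd : G.dist v₀ z = D := by omega
      exact closer_nbr_unique hac (show G.dist v₀ c = D + 1 from hcd)
        hz.symm hc hzr hvreach hzd hD.symm

end GoodPair

section Heights

open SimpleGraph

variable {V : Type} [Fintype V] {G : SimpleGraph V}

lemma exists_leaf_reachable (hconn : G.Connected) (hac : G.IsAcyclic)
    (hcard : 2 ≤ Fintype.card V) (v : V) :
    ∃ l, IsLeafVx G l ∧ G.Reachable v l := by
  classical
  obtain ⟨u, -, humax⟩ := Finset.exists_max_image Finset.univ (fun w => G.dist v w)
    ⟨v, Finset.mem_univ v⟩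
  set D := G.dist v u with hDdef
  have hD1 : 1 ≤ D := by
    obtain ⟨w, hw⟩ := Fintype.exists_ne_of_one_lt_card hcard v
    have h1 : 1 ≤ G.dist v w := by
      have h0 := (hconn v w).dist_eq_zero_iff
      have : G.dist v w ≠ 0 := fun he => hw.symm (h0.mp he)
      omega
    exact le_trans h1 (humax w (Finset.mem_univ w))
  obtain ⟨y, hy, hyd⟩ := exists_closer_nbr (hconn v u) hD1
  have huniq : ∀ z, G.Adj u z → z = y := by
    intro z hz
    have hzle : G.dist v z ≤ D := humax z (Finset.mem_univ z)
    have hzge : D ≤ G.dist v z + 1 := dist_le_add_one_of_adj hz.symm (hconn v z)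
    by_cases hzd : G.dist v z = D - 1
    · exact closer_nbr_unique hac (show G.dist v u = (D - 1) + 1 by omega)
        hz.symm hy.symm (hconn v z) (hconn v y) hzd (by omega)
    · exfalso
      have hzD : G.dist v z = D := by omega
      obtain ⟨Q, hQ⟩ := (hconn v z).exists_walk_length_eq_dist
      have hbl : Q.bypass.length = D := by
        have hle := SimpleGraph.Walk.length_bypass_le Q
        have hge := SimpleGraph.dist_le Q.bypass
        omega
      have husup : u ∉ Q.bypass.support := by
        intro hus
        have h1 := congrArg SimpleGraph.Walk.length (Q.bypass.take_spec hus)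
        rw [SimpleGraph.Walk.length_append] at h1
        have h2 := SimpleGraph.dist_le (Q.bypass.takeUntil u hus)
        have h3 : (Q.bypass.dropUntil u hus).length = 0 := by omega
        exact hz.ne (SimpleGraph.Walk.eq_of_length_eq_zero h3)
      obtain ⟨P, hP⟩ := (hconn v u).exists_walk_length_eq_dist
      have hPbl : P.bypass.length = D := by
        have hle := SimpleGraph.Walk.length_bypass_le P
        have hge := SimpleGraph.dist_le P.bypass
        omega
      have hpath1 : (SimpleGraph.Walk.cons hz Q.bypass.reverse).IsPath := by
        rw [SimpleGraph.Walk.cons_isPath_iff]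
        exact ⟨(SimpleGraph.Walk.bypass_isPath Q).reverse,
          by rwa [SimpleGraph.Walk.support_reverse, List.mem_reverse]⟩
      have hpath2 : (P.bypass.reverse).IsPath := (SimpleGraph.Walk.bypass_isPath P).reverse
      have := hac.path_unique ⟨_, hpath1⟩ ⟨_, hpath2⟩
      have hlen := congrArg (fun p => SimpleGraph.Walk.length p.val) this
      simp only [SimpleGraph.Walk.length_cons, SimpleGraph.Walk.length_reverse] at hlen
      omega
  have hns : G.neighborSet u = {y} := by
    ext z
    constructor
    · intro hz
      exact huniq z hz
    · rintro rfl
      exact hy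
  exact ⟨u, by rw [IsLeafVx, hns]; exact Set.ncard_singleton y, hconn v u⟩

lemma heightS_nonempty (hconn : G.Connected) (hac : G.IsAcyclic)
    (hcard : 2 ≤ Fintype.card V) (v : V) :
    {n | ∃ l, IsLeafVx G l ∧ G.Reachable v l ∧ G.dist v l = n}.Nonempty := by
  obtain ⟨l, hl, hr⟩ := exists_leaf_reachable hconn hac hcard v
  exact ⟨G.dist v l, l, hl, hr, rfl⟩

lemma height_adj_le (hconn : G.Connected) (hac : G.IsAcyclic)
    (hcard : 2 ≤ Fintype.card V) {u w : V} (h : G.Adj u w) :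
    heightVx G u ≤ heightVx G w + 1 := by
  have hne := heightS_nonempty hconn hac hcard w
  have hmem := Nat.sInf_mem hne
  obtain ⟨l, hl, hr, hd⟩ := hmem
  have hdle : G.dist u l ≤ G.dist w l + 1 := by
    have h1 : G.dist l u ≤ G.dist l w + 1 := dist_le_add_one_of_adj h.symm hr.symm
    have e1 : G.dist l u = G.dist u l := SimpleGraph.dist_comm
    have e2 : G.dist l w = G.dist w l := SimpleGraph.dist_comm
    omega
  have hle : heightVx G u ≤ G.dist u l :=
    Nat.sInf_le ⟨l, hl, h.reachable.trans hr, rfl⟩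
  simp only [heightVx] at hle hd ⊢
  omega

lemma odd_height_col (htree : G.IsTree) (hbal : IsBalanced G) :
    ∀ u w, G.Adj u w →
      (u ∈ {x | Odd (heightVx G x)} ↔ w ∉ {x | Odd (heightVx G x)}) := by
  intro u w h
  have hcard : 2 ≤ Fintype.card V := by
    have := Fintype.one_lt_card_iff_nontrivial (α := V)
    exact this.mpr ⟨u, w, h.ne⟩
  have h1 := height_adj_le htree.isConnected htree.IsAcyclic hcard h
  have h2 := height_adj_le htree.isConnected htree.IsAcyclic hcard h.symm
  have h3 := hbal u w h
  simp only [Set.mem_setOf_eq, Nat.odd_iff]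
  omega

end Heights

section Driver

open MvPolynomial

/-- The odd-neighborhood hypergraph of a colored graph. -/
noncomputable def Fam {V : Type} [Fintype V] (G : SimpleGraph V) (O : Set V) :
    Set (Finset V) := {s | ∃ v ∈ O, s = nbrFinset G v}

lemma mem_nbrFinset {V : Type} [Fintype V] {G : SimpleGraph V} {v x : V} :
    x ∈ nbrFinset G v ↔ G.Adj v x := by
  rw [nbrFinset, Set.Finite.mem_toFinset]
  rfl

lemma acyclic_of_inj_map {α β : Type} {H : SimpleGraph α} {G : SimpleGraph β}
    (f : α → β) (hf : Function.Injective f)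
    (hadj : ∀ a b, H.Adj a b → G.Adj (f a) (f b)) (hac : G.IsAcyclic) :
    H.IsAcyclic := by
  intro v c hc
  exact hac (c.map ⟨f, fun h => hadj _ _ h⟩)
    ((SimpleGraph.Walk.map_isCycle_iff_of_injective hf).mpr hc)

lemma CFam_not_mem (y : σ) {F : Set (Finset σ)} : ∀ s ∈ CFam y F, y ∉ s := by
  rintro _ ⟨s, -, rfl⟩
  exact Finset.notMem_erase y s

lemma NFam_not_mem (y : σ) {F : Set (Finset σ)} : ∀ s ∈ NFam y F, y ∉ s :=
  fun _ hs => hs.2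

lemma sqSpan_empty_fam_eq (k : Type) [Field k] (σ : Type) :
    sqSpan k (∅ : Set (Finset σ)) = Ideal.span (MvPolynomial.X '' (∅ : Set σ)) := by
  rw [sqSpan]
  have h1 : {m : MvPolynomial σ k | ∃ s ∈ (∅ : Set (Finset σ)), m = sqMono k s} = ∅ := by
    simp
  rw [h1]
  simp

lemma isGVD_empty_fam (k : Type) [Field k] (σ : Type) :
    IsGVD k σ (sqSpan k (∅ : Set (Finset σ))) := by
  have hbot := sqSpan_empty_fam_eq k σ
  refine IsGVD.base σ _ ?_ (Or.inr ⟨∅, hbot⟩)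
  rw [hbot]
  have hb : (Ideal.span (MvPolynomial.X '' (∅ : Set σ)) : Ideal (MvPolynomial σ k)) = ⊥ := by
    simp
  rw [hb]
  exact unmixedIdeal_of_isPrime Ideal.bot_prime

theorem drive (k : Type) [Field k] :
    ∀ (n : ℕ) (σ : Type) [Fintype σ] (G : SimpleGraph σ) (O : Set σ),
      Fintype.card σ ≤ n → G.IsAcyclic →
      (∀ u w, G.Adj u w → (u ∈ O ↔ w ∉ O)) →
      (∃ κ : ℕ, ∀ W : Set σ, MinCov (Fam G O) W → W.ncard = κ) →
      IsGVD k σ (sqSpan k (Fam G O)) := by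
  intro n
  induction n with
  | zero =>
    intro σ _ G O hcard hac hcol hunm
    haveI : IsEmpty σ := Fintype.card_eq_zero_iff.mp (Nat.le_zero.mp hcard)
    have hFam : Fam G O = ∅ := by
      ext s
      simp only [Fam, Set.mem_setOf_eq, Set.mem_empty_iff_false, iff_false]
      rintro ⟨v, -, -⟩
      exact IsEmpty.elim ‹IsEmpty σ› v
    rw [hFam]
    exact isGVD_empty_fam k σ
  | succ n ih =>
    intro σ _ G O hcard hac hcol hunm
    by_cases hiso : ∃ v ∈ O, nbrFinset G v = ∅
    · obtain ⟨v, hv, hnv⟩ := hiso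
      have htop : sqSpan k (Fam G O) = ⊤ := sqSpan_empty_mem ⟨v, hv, hnv.symm⟩
      rw [htop]
      exact IsGVD.base σ ⊤ unmixedIdeal_top (Or.inl rfl)
    · by_cases hOem : Fam G O = ∅
      · rw [hOem]
        exact isGVD_empty_fam k σ
      · push_neg at hiso
        obtain ⟨s₁, hs₁⟩ := Set.nonempty_iff_ne_empty.mpr hOem
        obtain ⟨v₁, hv₁, -⟩ := hs₁
        have hnbr : ∀ v ∈ O, ∃ u, G.Adj v u := by
          intro v hv
          obtain ⟨x, hx⟩ := hiso v hv
          exact ⟨x, mem_nbrFinset.mp hx⟩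
        obtain ⟨v, hvO, y, hadj, hgoodraw⟩ := exists_good_pair hac hcol hv₁ hnbr
        have hyO : y ∉ O := (hcol v y hadj).mp hvO
        have hvyO : ∀ u ∈ O, u ≠ y := fun u hu he => hyO (he ▸ hu)
        obtain ⟨κ, hκ⟩ := hunm
        have hgood : ∀ t ∈ Fam G O, y ∉ t → ∀ x ∈ t, x ∉ (nbrFinset G v).erase y := by
          rintro t ⟨w, hw, rfl⟩ hyt x hxt hxs
          rw [Finset.mem_erase, mem_nbrFinset] at hxs
          rw [mem_nbrFinset] at hxt
          have hwv : w = v := hgoodraw x hxs.2 hxs.1 w hxt.symm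
          subst hwv
          exact hyt (mem_nbrFinset.mpr hadj)
        have hsv : nbrFinset G v ∈ Fam G O := ⟨v, hvO, rfl⟩
        have hysv : y ∈ nbrFinset G v := mem_nbrFinset.mpr hadj
        -- cardinality of the subtype
        have hpos : 1 ≤ Fintype.card σ := by
          have : Fintype.card σ ≠ 0 := by
            intro h0
            exact (Fintype.card_eq_zero_iff.mp h0).elim v
          omega
        have hcard' : Fintype.card {x : σ // x ≠ y} ≤ n := by
          have h1 : Fintype.card {x : σ // x ≠ y} = Fintype.card σ - 1 := by
            have h2 := Fintype.card_subtype_compl (fun x : σ => x = y)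
            have h3 : Fintype.card {x : σ // x = y} = 1 := Fintype.card_subtype_eq y
            rw [h3] at h2
            exact h2
          omega
        -- the C recursion
        have hCgvd : IsGVD k {x : σ // x ≠ y}
            (sqSpan k (dropVar y '' CFam y (Fam G O))) := by
          set G' : SimpleGraph {x : σ // x ≠ y} :=
            SimpleGraph.comap (Subtype.val) G with hG'
          have hfamC : dropVar y '' CFam y (Fam G O) = Fam G' {x | x.val ∈ O} := by
            ext t
            constructor
            · rintro ⟨s, ⟨s₀, ⟨w, hw, rfl⟩, rfl⟩, rfl⟩
              refine ⟨⟨w, hvyO w hw⟩, hw, ?_⟩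
              ext x
              rw [mem_dropVar_iff, Finset.mem_erase, mem_nbrFinset]
              simp only [mem_nbrFinset]
              have : x.val ≠ y := x.2
              constructor
              · rintro ⟨-, h⟩; exact h
              · intro h; exact ⟨this, h⟩
            · rintro ⟨v', hv', rfl⟩
              refine ⟨(nbrFinset G v'.val).erase y,
                ⟨nbrFinset G v'.val, ⟨v'.val, hv', rfl⟩, rfl⟩, ?_⟩
              ext x
              rw [mem_dropVar_iff, Finset.mem_erase, mem_nbrFinset]
              simp only [mem_nbrFinset]
              have : x.val ≠ y := x.2
              constructor
              · rintro ⟨-, h⟩; exact h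
              · intro h; exact ⟨this, h⟩
          rw [hfamC]
          apply ih {x : σ // x ≠ y} G' {x | x.val ∈ O} hcard'
            (acyclic_of_inj_map Subtype.val Subtype.val_injective (fun a b h => h) hac)
            (fun u w h => hcol u.val w.val h)
          refine ⟨κ, ?_⟩
          intro W hW
          rw [← hfamC] at hW
          have h1 := minCov_dropVar (CFam_not_mem y) hW
          have h2 := hκ _ (minCov_CFam h1)
          rwa [Set.ncard_image_of_injective _ Subtype.val_injective] at h2
        -- the N recursion
        have hNgvd : IsGVD k {x : σ // x ≠ y}
            (sqSpan k (dropVar y '' NFam y (Fam G O))) := by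
          set bad : Set σ := {u | u ∈ O ∧ G.Adj u y} with hbad
          set G'' : SimpleGraph {x : σ // x ≠ y} :=
            { Adj := fun a b => G.Adj a.val b.val ∧ a.val ∉ bad ∧ b.val ∉ bad
              symm := ⟨by
                rintro a b ⟨h1, h2, h3⟩
                exact ⟨h1.symm, h3, h2⟩⟩
              loopless := ⟨by
                rintro a ⟨h1, -, -⟩
                exact G.irrefl h1⟩ } with hG''
          set O'' : Set {x : σ // x ≠ y} := {x | x.val ∈ O ∧ ¬ G.Adj x.val y} with hO''
          have hfamN : dropVar y '' NFam y (Fam G O) = Fam G'' O'' := by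
            ext t
            constructor
            · rintro ⟨s, ⟨⟨w, hw, rfl⟩, hys⟩, rfl⟩
              have hwy : ¬ G.Adj w y := fun h => hys (mem_nbrFinset.mpr h)
              refine ⟨⟨w, hvyO w hw⟩, ⟨hw, hwy⟩, ?_⟩
              ext x
              rw [mem_dropVar_iff, mem_nbrFinset, mem_nbrFinset]
              constructor
              · intro h
                exact ⟨h, fun hb => hwy hb.2, fun hb => ((hcol w x.val h).mp hw) hb.1⟩
              · exact fun h => h.1
            · rintro ⟨v', ⟨hv'O, hv'y⟩, rfl⟩
              refine ⟨nbrFinset G v'.val, ⟨⟨v'.val, hv'O, rfl⟩,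
                fun h => hv'y (mem_nbrFinset.mp h)⟩, ?_⟩
              ext x
              rw [mem_dropVar_iff, mem_nbrFinset, mem_nbrFinset]
              constructor
              · intro h
                exact ⟨h, fun hb => hv'y hb.2, fun hb => ((hcol v'.val x.val h).mp hv'O) hb.1⟩
              · exact fun h => h.1
          have hcol'' : ∀ u w, G''.Adj u w → (u ∈ O'' ↔ w ∉ O'') := by
            intro u w h
            obtain ⟨huw, hub, hwb⟩ := h
            have hc := hcol u.val w.val huw
            constructor
            · rintro ⟨h1, -⟩ ⟨h2, -⟩
              exact (hc.mp h1) h2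
            · intro h1
              have hu : u.val ∈ O := by
                by_contra hu
                have hw : w.val ∈ O := by tauto
                exact h1 ⟨hw, fun ha => hwb ⟨hw, ha⟩⟩
              exact ⟨hu, fun ha => hub ⟨hu, ha⟩⟩
          rw [hfamN]
          apply ih {x : σ // x ≠ y} G'' O'' hcard'
            (acyclic_of_inj_map Subtype.val Subtype.val_injective
              (fun a b h => h.1) hac)
            hcol''
          refine ⟨κ - 1, ?_⟩
          intro W hW
          rw [← hfamN] at hW
          have h1 := minCov_dropVar (NFam_not_mem y) hW
          obtain ⟨hyW, h2⟩ := minCov_NFam hsv hysv hgood h1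
          have h3 := hκ _ h2
          rw [Set.ncard_insert_of_notMem hyW (Set.toFinite _)] at h3
          have h4 : (Subtype.val '' W).ncard = W.ncard :=
            Set.ncard_image_of_injective _ Subtype.val_injective
          omega
        exact IsGVD.step σ (sqSpan k (Fam G O)) (unmixed_of_minCov_ncard hκ)
          (Fam G O) rfl y (sqSpan_decomp (Fam G O) y) hCgvd hNgvd

end Driver

section TopLevel

variable {V : Type} [Fintype V] {G : SimpleGraph V}

lemma exists_adj_of_connected (hconn : G.Connected) (hcard : 2 ≤ Fintype.card V) (v : V) :
    ∃ u, G.Adj v u := by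
  obtain ⟨w, hw⟩ := Fintype.exists_ne_of_one_lt_card hcard v
  obtain ⟨p⟩ := hconn v w
  cases p with
  | nil => exact absurd rfl hw.symm
  | cons h q => exact ⟨_, h⟩

lemma no_odd_of_small (hcard : Fintype.card V ≤ 1) : ∀ v : V, ¬ Odd (heightVx G v) := by
  intro v hodd
  have hne : {n | ∃ l, IsLeafVx G l ∧ G.Reachable v l ∧ G.dist v l = n}.Nonempty := by
    by_contra he
    rw [Set.not_nonempty_iff_eq_empty] at he
    rw [heightVx, he, Nat.sInf_empty] at hodd
    simp at hodd
  obtain ⟨n, l, hl, -, -⟩ := hne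
  have hpos : (G.neighborSet l).Nonempty := by
    apply Set.nonempty_of_ncard_ne_zero
    rw [hl]
    omega
  obtain ⟨u, hu⟩ := hpos
  have hne2 : u ≠ l := fun he => G.irrefl (he ▸ hu)
  have := Fintype.one_lt_card_iff_nontrivial.mpr ⟨u, l, hne2⟩
  omega

lemma minCov_subset_compl {O : Set V} (hcol : ∀ u w, G.Adj u w → (u ∈ O ↔ w ∉ O))
    {W : Set V} (h : MinCov (Fam G O) W) : ∀ x ∈ W, x ∉ O := by
  intro x hx
  obtain ⟨s, ⟨v, hv, rfl⟩, hxs⟩ := h.mem_union x hx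
  exact (hcol v x (mem_nbrFinset.mp hxs)).mp hv

/-- all minimal covers of the odd side of a TD-unmixed tree have the same size. -/
lemma covers_eq_of_TDUnmixed (hconn : G.Connected) (hcard : 2 ≤ Fintype.card V)
    {O : Set V} (hcol : ∀ u w, G.Adj u w → (u ∈ O ↔ w ∉ O))
    (htd : TDUnmixed G) {W₁ W₂ : Set V}
    (h₁ : MinCov (Fam G O) W₁) (h₂ : MinCov (Fam G O) W₂) : W₁.ncard = W₂.ncard := by
  classical
  -- a minimal cover of the complementary family
  have hcovuniv : Cov (Fam G Oᶜ) Set.univ := by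
    rintro _ ⟨u, -, rfl⟩
    obtain ⟨x, hx⟩ := exists_adj_of_connected hconn hcard u
    exact ⟨x, Set.mem_univ x, mem_nbrFinset.mpr hx⟩
  obtain ⟨W', -, hW'⟩ := exists_minCov_le (Set.univ : Set V).ncard Set.univ le_rfl hcovuniv
  have hW'O : ∀ x ∈ W', x ∈ O := by
    intro x hx
    obtain ⟨s, ⟨u, hu, rfl⟩, hxs⟩ := hW'.mem_union x hx
    have := hcol u x (mem_nbrFinset.mp hxs)
    rw [Set.mem_compl_iff] at hu
    tauto
  -- build minimal TD sets
  have key : ∀ W : Set V, MinCov (Fam G O) W → IsMinTDSet G (W ∪ W') := by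
    intro W hW
    have hWO := minCov_subset_compl hcol hW
    constructor
    · rw [IsTDSet, Set.eq_univ_iff_forall]
      intro x
      by_cases hx : x ∈ O
      · obtain ⟨c, hcW, hcs⟩ := hW.1 (nbrFinset G x) ⟨x, hx, rfl⟩
        exact ⟨c, Or.inl hcW, (mem_nbrFinset.mp hcs).symm⟩
      · obtain ⟨c, hcW, hcs⟩ := hW'.1 (nbrFinset G x) ⟨x, hx, rfl⟩
        exact ⟨c, Or.inr hcW, (mem_nbrFinset.mp hcs).symm⟩
    · intro S' hss hTD
      rw [IsTDSet, Set.eq_univ_iff_forall] at hTD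
      have hcovO : Cov (Fam G O) (S' ∩ Oᶜ) := by
        rintro _ ⟨v, hv, rfl⟩
        obtain ⟨z, hz, hadj⟩ := hTD v
        refine ⟨z, ⟨hz, (hcol v z hadj.symm).mp hv⟩, mem_nbrFinset.mpr hadj.symm⟩
      have hcovE : Cov (Fam G Oᶜ) (S' ∩ O) := by
        rintro _ ⟨u, hu, rfl⟩
        obtain ⟨z, hz, hadj⟩ := hTD u
        rw [Set.mem_compl_iff] at hu
        have hzO : z ∈ O := by
          have := hcol u z hadj.symm
          tauto
        exact ⟨z, ⟨hz, hzO⟩, mem_nbrFinset.mpr hadj.symm⟩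
      have hsub1 : S' ∩ Oᶜ ⊆ W := by
        intro z hz
        rcases hss.subset hz.1 with hzW | hzW'
        · exact hzW
        · exact absurd (hW'O z hzW') hz.2
      have hsub2 : S' ∩ O ⊆ W' := by
        intro z hz
        rcases hss.subset hz.1 with hzW | hzW'
        · exact absurd (hWO z hzW) (fun h => h hz.2)
        · exact hzW'
      have heq1 : S' ∩ Oᶜ = W := by
        rcases hsub1.ssubset_or_eq with hss1 | he
        · exact absurd hcovO (hW.2 _ hss1)
        · exact he
      have heq2 : S' ∩ O = W' := by
        rcases hsub2.ssubset_or_eq with hss2 | he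
        · exact absurd hcovE (hW'.2 _ hss2)
        · exact he
      apply hss.ne
      ext x
      constructor
      · intro hx
        by_cases hxO : x ∈ O
        · exact Or.inr (heq2 ▸ (⟨hx, hxO⟩ : x ∈ S' ∩ O))
        · exact Or.inl (heq1 ▸ (⟨hx, hxO⟩ : x ∈ S' ∩ Oᶜ))
      · intro hx
        rcases hx with hx | hx
        · exact (heq1 ▸ hx : x ∈ S' ∩ Oᶜ).1
        · exact (heq2 ▸ hx : x ∈ S' ∩ O).1
  have hdisj : ∀ W : Set V, MinCov (Fam G O) W → Disjoint W W' := by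
    intro W hW
    rw [Set.disjoint_left]
    intro x hx hx'
    exact minCov_subset_compl hcol hW x hx (hW'O x hx')
  have h := htd _ _ (key W₁ h₁) (key W₂ h₂)
  rw [Set.ncard_union_eq (hdisj W₁ h₁) (Set.toFinite _) (Set.toFinite _),
    Set.ncard_union_eq (hdisj W₂ h₂) (Set.toFinite _) (Set.toFinite _)] at h
  omega

end TopLevel

/-- **Theorem** (Theorem 4.2): the odd-open neighborhood ideal of a finite TD-unmixed
balanced tree is geometrically vertex decomposable. -/
theorem oddONI_isGVD (k : Type) [Field k] {V : Type} [Fintype V] (G : SimpleGraph V)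
    (htree : G.IsTree) (hbal : IsBalanced G) (hunm : TDUnmixed G) :
    IsGVD k V (oddONI k G) := by

  classical
  set O : Set V := {v | Odd (heightVx G v)} with hO
  have hcol := odd_height_col htree hbal
  have hfam : oddONI k G = sqSpan k (Fam G O) := rfl
  rw [hfam]
  apply drive k (Fintype.card V) V G O le_rfl htree.IsAcyclic hcol
  by_cases hcard : 2 ≤ Fintype.card V
  · have hcovuniv : Cov (Fam G O) Set.univ := by
      rintro _ ⟨u, -, rfl⟩
      obtain ⟨x, hx⟩ := exists_adj_of_connected htree.isConnected hcard u
      exact ⟨x, Set.mem_univ x, mem_nbrFinset.mpr hx⟩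
    obtain ⟨Wc, -, hWc⟩ := exists_minCov_le (Set.univ : Set V).ncard Set.univ le_rfl hcovuniv
    exact ⟨Wc.ncard, fun W hW =>
      covers_eq_of_TDUnmixed htree.isConnected hcard hcol hunm hW hWc⟩
  · have hO0 : O = ∅ := by
      ext v
      simp only [hO, Set.mem_setOf_eq, Set.mem_empty_iff_false, iff_false]
      exact no_odd_of_small (by omega) v
    have hFam : Fam G O = ∅ := by
      ext s
      simp [Fam, hO0]
    refine ⟨0, fun W hW => ?_⟩
    rw [hFam] at hW
    rw [minCov_empty_family hW]
    exact Set.ncard_empty V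
end

section
/- Let T be a finite TD-unmixed tree. Then the open neighborhood ideal N(T) in the polynomial ring k[x_v : v ∈ V(T)] over a field k is geometrically vertex decomposable. -/
open scoped Classical

section ONIDefs

variable {V : Type} [Fintype V]

/-- The open neighborhood ideal of a graph: generated by the monomials `X_{N(v)}`
for all vertices `v`. -/
noncomputable def ONI (k : Type) [Field k] (G : SimpleGraph V) : Ideal (MvPolynomial V k) :=
  sqSpan k {s | ∃ v : V, s = nbrFinset G v}

end ONIDefs

section Comb

namespace ONIGVD

open Finset

variable {σ : Type}

/-- `t` is a transversal of the family `F`. -/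
def Tr (F : Set (Finset σ)) (t : Finset σ) : Prop := ∀ e ∈ F, ∃ x ∈ e, x ∈ t

/-- `t` is a minimal transversal of `F`. -/
def MinTr (F : Set (Finset σ)) (t : Finset σ) : Prop := Tr F t ∧ ∀ t' ⊂ t, ¬ Tr F t'

/-- All minimal transversals of `F` have the same cardinality. -/
def Good (F : Set (Finset σ)) : Prop :=
  ∀ t₁ t₂, MinTr F t₁ → MinTr F t₂ → t₁.card = t₂.card

lemma MinTr.essential {F : Set (Finset σ)} {t : Finset σ} (h : MinTr F t) {x : σ}
    (hx : x ∈ t) : ∃ e ∈ F, x ∈ e ∧ ∀ z ∈ e, z ∈ t → z = x := by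
  by_contra hcon
  push_neg at hcon
  refine h.2 (t.erase x) (Finset.erase_ssubset hx) ?_
  intro e he
  by_cases hxe : x ∈ e
  · obtain ⟨z, hz, hzt, hzx⟩ := hcon e he hxe
    exact ⟨z, hz, Finset.mem_erase.2 ⟨hzx, hzt⟩⟩
  · obtain ⟨z, hz, hzt⟩ := h.1 e he
    exact ⟨z, hz, Finset.mem_erase.2 ⟨fun hzx => hxe (hzx ▸ hz), hzt⟩⟩

lemma MinTr.notMem {F : Set (Finset σ)} {t : Finset σ} (h : MinTr F t) {y : σ}
    (hy : ∀ e ∈ F, y ∉ e) : y ∉ t := by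
  intro hyt
  obtain ⟨e, he, hye, -⟩ := h.essential hyt
  exact hy e he hye

/-- A minimal transversal of the `C`-family is a minimal transversal of `F` avoiding `y`. -/
lemma minTr_CFam {F : Set (Finset σ)} {y : σ} {t : Finset σ}
    (h : MinTr (CFam y F) t) : y ∉ t ∧ MinTr F t := by
  have hyt : y ∉ t := h.notMem (by
    rintro e' ⟨e, -, rfl⟩
    exact Finset.notMem_erase _ _)
  refine ⟨hyt, ⟨?_, ?_⟩⟩
  · intro e he
    obtain ⟨x, hx, hxt⟩ := h.1 (e.erase y) ⟨e, he, rfl⟩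
    exact ⟨x, Finset.mem_of_mem_erase hx, hxt⟩
  · intro t' ht' htr'
    refine h.2 t' ht' ?_
    rintro e' ⟨e, he, rfl⟩
    obtain ⟨x, hx, hxt'⟩ := htr' e he
    have hxy : x ≠ y := fun hxy => hyt (hxy ▸ ht'.1 hxt')
    exact ⟨x, Finset.mem_erase.2 ⟨hxy, hx⟩, hxt'⟩

lemma good_CFam {F : Set (Finset σ)} {y : σ} (hg : Good F) : Good (CFam y F) := by
  intro t₁ t₂ h₁ h₂
  exact hg t₁ t₂ (minTr_CFam h₁).2 (minTr_CFam h₂).2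

/-- The master move lemma: if `y` lies in an edge `e₀` all of whose other elements are
private to `e₀`, then every minimal transversal of the `N`-family extends by `y` to a
minimal transversal of `F`. -/
lemma minTr_NFam {F : Set (Finset σ)} {e₀ : Finset σ} (he₀ : e₀ ∈ F) {y : σ} (hy : y ∈ e₀)
    (hpriv : ∀ x ∈ e₀, x ≠ y → ∀ f ∈ F, f ≠ e₀ → x ∉ f) {t : Finset σ}
    (h : MinTr (NFam y F) t) : y ∉ t ∧ MinTr F (insert y t) := by
  have hyt : y ∉ t := h.notMem (by rintro e ⟨he, hye⟩; exact hye)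
  have hte₀ : ∀ x ∈ t, x ∉ e₀ := by
    intro x hxt hxe₀
    have hxy : x ≠ y := fun hxy => hyt (hxy ▸ hxt)
    obtain ⟨f, hf, hxf, -⟩ := h.essential hxt
    obtain ⟨hfF, hyf⟩ := hf
    have hfe₀ : f ≠ e₀ := fun hfe => hyf (hfe ▸ hy)
    exact hpriv x hxe₀ hxy f hfF hfe₀ hxf
  refine ⟨hyt, ⟨?_, ?_⟩⟩
  · intro e he
    by_cases hye : y ∈ e
    · exact ⟨y, hye, Finset.mem_insert_self _ _⟩
    · obtain ⟨x, hx, hxt⟩ := h.1 e ⟨he, hye⟩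
      exact ⟨x, hx, Finset.mem_insert_of_mem hxt⟩
  · intro t' ht' htr'
    by_cases hyt' : y ∈ t'
    · -- erase y t' is a transversal of the N-family strictly inside t
      have hsub : t'.erase y ⊆ t := by
        intro z hz
        obtain ⟨hzy, hzt'⟩ := Finset.mem_erase.1 hz
        rcases Finset.mem_insert.1 (ht'.1 hzt') with h' | h'
        · exact absurd h' hzy
        · exact h'
      have hne : t'.erase y ≠ t := by
        intro hEq
        apply ht'.2
        intro z hz
        rcases Finset.mem_insert.1 hz with rfl | hzt
        · exact hyt'
        · have : z ∈ t'.erase y := hEq ▸ hzt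
          exact (Finset.mem_erase.1 this).2
      refine h.2 (t'.erase y) (ssubset_of_subset_of_ne hsub hne) ?_
      rintro e ⟨heF, hye⟩
      obtain ⟨x, hxe, hxt'⟩ := htr' e heF
      have hxy : x ≠ y := fun hxy => hye (hxy ▸ hxe)
      exact ⟨x, hxe, Finset.mem_erase.2 ⟨hxy, hxt'⟩⟩
    · -- t' misses e₀ entirely
      obtain ⟨x, hxe₀, hxt'⟩ := htr' e₀ he₀
      rcases Finset.mem_insert.1 (ht'.1 hxt') with rfl | hxt
      · exact hyt' hxt'
      · exact hte₀ x hxt hxe₀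

lemma good_NFam {F : Set (Finset σ)} {e₀ : Finset σ} (he₀ : e₀ ∈ F) {y : σ} (hy : y ∈ e₀)
    (hpriv : ∀ x ∈ e₀, x ≠ y → ∀ f ∈ F, f ≠ e₀ → x ∉ f) (hg : Good F) :
    Good (NFam y F) := by
  intro t₁ t₂ h₁ h₂
  obtain ⟨hy₁, hm₁⟩ := minTr_NFam he₀ hy hpriv h₁
  obtain ⟨hy₂, hm₂⟩ := minTr_NFam he₀ hy hpriv h₂
  have := hg _ _ hm₁ hm₂
  rwa [Finset.card_insert_of_notMem hy₁, Finset.card_insert_of_notMem hy₂,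
    Nat.add_right_cancel_iff] at this

section Subtype

variable {y : σ}

/-- The embedding of the subtype omitting `y`. -/
def emb (y : σ) : {x : σ // x ≠ y} ↪ σ := Function.Embedding.subtype _

lemma dropVar_map (e : Finset σ) : (dropVar y e).map (emb y) = e.erase y := by
  ext z
  simp only [dropVar, emb, Finset.mem_map, Finset.mem_subtype, Function.Embedding.coe_subtype,
    Finset.mem_erase]
  constructor
  · rintro ⟨⟨x, hx⟩, hmem, rfl⟩
    exact ⟨hx, hmem⟩
  · rintro ⟨hzy, hze⟩
    exact ⟨⟨z, hzy⟩, hze, rfl⟩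

lemma dropVar_map_of_notMem {e : Finset σ} (he : y ∉ e) : (dropVar y e).map (emb y) = e := by
  rw [dropVar_map, Finset.erase_eq_of_notMem he]

lemma good_dropVar {H : Set (Finset σ)} (hH : ∀ e ∈ H, y ∉ e) (hg : Good H) :
    Good ((dropVar y) '' H) := by
  have key : ∀ t : Finset {x : σ // x ≠ y}, MinTr ((dropVar y) '' H) t →
      MinTr H (t.map (emb y)) := by
    intro t ht
    constructor
    · intro e he
      obtain ⟨x, hx, hxt⟩ := ht.1 (dropVar y e) ⟨e, he, rfl⟩
      refine ⟨(x : σ), ?_, Finset.mem_map_of_mem _ hxt⟩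
      have := Finset.mem_subtype.1 hx
      exact this
    · intro s hs hts
      -- s ⊆ map, so s is a map of a subtype finset
      have hsub : ∀ z ∈ s, z ≠ y := by
        intro z hz
        have := hs.1 hz
        obtain ⟨⟨x, hx⟩, -, rfl⟩ := Finset.mem_map.1 this
        exact hx
      set s' : Finset {x : σ // x ≠ y} := s.subtype (· ≠ y) with hs'
      have hmap : s'.map (emb y) = s := by
        ext z
        simp only [hs', emb, Finset.mem_map, Finset.mem_subtype, Function.Embedding.coe_subtype]
        constructor
        · rintro ⟨⟨x, hx⟩, hmem, rfl⟩; exact hmem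
        · intro hz; exact ⟨⟨z, hsub z hz⟩, hz, rfl⟩
      have hss : s' ⊂ t := by
        rw [← Finset.map_ssubset_map (f := emb y), hmap]
        exact hs
      refine ht.2 s' hss ?_
      rintro e' ⟨e, he, rfl⟩
      obtain ⟨x, hxe, hxs⟩ := hts e he
      have hxy : x ≠ y := fun hxy => hH e he (hxy ▸ hxe)
      refine ⟨⟨x, hxy⟩, Finset.mem_subtype.2 hxe, ?_⟩
      rw [hs']
      exact Finset.mem_subtype.2 hxs
  intro t₁ t₂ h₁ h₂
  have := hg _ _ (key t₁ h₁) (key t₂ h₂)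
  rwa [Finset.card_map, Finset.card_map] at this

lemma CFam_notMem (F : Set (Finset σ)) : ∀ e ∈ CFam y F, y ∉ e := by
  rintro e' ⟨e, -, rfl⟩
  exact Finset.notMem_erase _ _

lemma NFam_notMem (F : Set (Finset σ)) : ∀ e ∈ NFam y F, y ∉ e := by
  rintro e ⟨-, hye⟩
  exact hye

end Subtype

end ONIGVD

end Comb
section Alg

namespace ONIGVD

open MvPolynomial

variable {k : Type} [Field k] {σ : Type}

/-- The exponent vector of the squarefree monomial with support `s`. -/
noncomputable def expo (s : Finset σ) : σ →₀ ℕ := s.sum fun i => Finsupp.single i 1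

lemma expo_apply (s : Finset σ) (j : σ) : expo s j = if j ∈ s then 1 else 0 := by
  classical
  rw [expo, Finset.sum_apply']
  by_cases hj : j ∈ s
  · rw [if_pos hj, Finset.sum_eq_single j (fun i _ hij => Finsupp.single_eq_of_ne' hij)
      (fun h => absurd hj h), Finsupp.single_eq_same]
  · rw [if_neg hj, Finset.sum_eq_zero]
    intro i hi
    exact Finsupp.single_eq_of_ne' (fun hij => hj (hij ▸ hi))

lemma sqMono_eq_monomial (s : Finset σ) : sqMono k s = monomial (expo s) 1 := by
  classical
  induction s using Finset.induction_on with
  | empty => simp [sqMono, expo]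
  | @insert a s' hx ih =>
      have hexp : expo (insert a s') = Finsupp.single a 1 + expo s' := by
        rw [expo, expo, Finset.sum_insert hx]
      rw [sqMono, Finset.prod_insert hx, ← sqMono, ih, hexp, X, monomial_mul, one_mul]

lemma expo_le_iff {s : Finset σ} {m : σ →₀ ℕ} : expo s ≤ m ↔ ∀ i ∈ s, m i ≠ 0 := by
  constructor
  · intro h i hi
    have := h i
    rw [expo_apply, if_pos hi] at this
    omega
  · intro h i
    rw [expo_apply]
    by_cases hi : i ∈ s
    · rw [if_pos hi]
      have := h i hi
      omega
    · simp [hi]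

/-- Membership in `sqSpan` for a polynomial, monomial by monomial. -/
lemma mem_sqSpan_iff {F : Set (Finset σ)} {p : MvPolynomial σ k} :
    p ∈ sqSpan k F ↔ ∀ m ∈ p.support, ∃ s ∈ F, ∀ i ∈ s, m i ≠ 0 := by
  have hgen : {q : MvPolynomial σ k | ∃ s ∈ F, q = sqMono k s} =
      (fun m => monomial m (1 : k)) '' (expo '' F) := by
    ext q
    constructor
    · rintro ⟨s, hs, rfl⟩
      exact ⟨expo s, ⟨s, hs, rfl⟩, (sqMono_eq_monomial s).symm⟩
    · rintro ⟨m, ⟨s, hs, rfl⟩, rfl⟩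
      exact ⟨s, hs, (sqMono_eq_monomial s).symm⟩
  rw [sqSpan, hgen, mem_ideal_span_monomial_image]
  constructor
  · intro h m hm
    obtain ⟨m', ⟨s, hs, rfl⟩, hle⟩ := h m hm
    exact ⟨s, hs, expo_le_iff.1 hle⟩
  · intro h m hm
    obtain ⟨s, hs, hcond⟩ := h m hm
    exact ⟨expo s, ⟨s, hs, rfl⟩, expo_le_iff.2 hcond⟩

lemma sqMono_mem_sqSpan {F : Set (Finset σ)} {s : Finset σ} (hs : s ∈ F) :
    sqMono k s ∈ sqSpan k F :=
  Ideal.subset_span ⟨s, hs, rfl⟩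

lemma span_X_singleton (y : σ) :
    Ideal.span {(X y : MvPolynomial σ k)} = sqSpan k {({y} : Finset σ)} := by
  have : {q : MvPolynomial σ k | ∃ s ∈ ({({y} : Finset σ)} : Set (Finset σ)), q = sqMono k s}
      = {X y} := by
    ext q
    simp only [Set.mem_setOf_eq, Set.mem_singleton_iff]
    constructor
    · rintro ⟨s, hs, rfl⟩
      have hs' : s = {y} := hs
      subst hs'
      simp [sqMono]
    · rintro rfl
      exact ⟨{y}, rfl, by simp [sqMono]⟩
  rw [sqSpan, this]

/-- The geometric vertex decomposition identity, automatic for squarefree monomial ideals. -/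
lemma sqSpan_decomposition (F : Set (Finset σ)) (y : σ) :
    sqSpan k F = sqSpan k (CFam y F) ⊓ (sqSpan k (NFam y F) ⊔ Ideal.span {X y}) := by
  have hsup : sqSpan k (NFam y F) ⊔ Ideal.span {(X y : MvPolynomial σ k)} =
      sqSpan k (NFam y F ∪ {({y} : Finset σ)}) := by
    rw [span_X_singleton, sqSpan, sqSpan, sqSpan, ← Ideal.span_union]
    congr 1
    ext q
    constructor
    · rintro (⟨s, hs, rfl⟩ | ⟨s, hs, rfl⟩)
      · exact ⟨s, Or.inl hs, rfl⟩
      · exact ⟨s, Or.inr hs, rfl⟩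
    · rintro ⟨s, hs | hs, rfl⟩
      · exact Or.inl ⟨s, hs, rfl⟩
      · exact Or.inr ⟨s, hs, rfl⟩
  rw [hsup]
  ext p
  rw [Ideal.mem_inf, mem_sqSpan_iff, mem_sqSpan_iff, mem_sqSpan_iff]
  constructor
  · intro h
    constructor
    · intro m hm
      obtain ⟨s, hs, hcond⟩ := h m hm
      exact ⟨s.erase y, ⟨s, hs, rfl⟩, fun i hi => hcond i (Finset.mem_of_mem_erase hi)⟩
    · intro m hm
      obtain ⟨s, hs, hcond⟩ := h m hm
      by_cases hys : y ∈ s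
      · exact ⟨{y}, Or.inr rfl, fun i hi => by
          rw [Finset.mem_singleton] at hi
          exact hi ▸ hcond y hys⟩
      · exact ⟨s, Or.inl ⟨hs, hys⟩, hcond⟩
  · rintro ⟨hC, hN⟩ m hm
    rcases hN m hm with ⟨s, hs | hs, hcond⟩
    · exact ⟨s, hs.1, hcond⟩
    · -- m y ≠ 0; use the C-witness
      rw [Set.mem_singleton_iff] at hs
      subst hs
      have hmy : m y ≠ 0 := hcond y (Finset.mem_singleton_self y)
      obtain ⟨s', ⟨s, hsF, rfl⟩, hcond'⟩ := hC m hm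
      refine ⟨s, hsF, fun i hi => ?_⟩
      by_cases hiy : i = y
      · exact hiy ▸ hmy
      · exact hcond' i (Finset.mem_erase.2 ⟨hiy, hi⟩)

/-- If `∅ ∈ F` then `sqSpan k F = ⊤`. -/
lemma sqSpan_eq_top {F : Set (Finset σ)} (h : (∅ : Finset σ) ∈ F) : sqSpan k F = ⊤ := by
  rw [Ideal.eq_top_iff_one]
  have : (1 : MvPolynomial σ k) = sqMono k ∅ := by simp [sqMono]
  rw [this]
  exact sqMono_mem_sqSpan h

/-- If all edges are singletons, `sqSpan` is generated by variables. -/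
lemma sqSpan_of_singletons {F : Set (Finset σ)} (h : ∀ e ∈ F, e.card = 1) :
    sqSpan k F = Ideal.span (X '' {i : σ | ({i} : Finset σ) ∈ F}) := by
  rw [sqSpan]
  congr 1
  ext q
  constructor
  · rintro ⟨s, hs, rfl⟩
    obtain ⟨i, rfl⟩ := Finset.card_eq_one.1 (h s hs)
    exact ⟨i, hs, by simp [sqMono]⟩
  · rintro ⟨i, hi, rfl⟩
    exact ⟨{i}, hi, by simp [sqMono]⟩

/-- `UnmixedIdeal ⊤` holds vacuously. -/
lemma unmixed_top {R : Type*} [CommRing R] : UnmixedIdeal (⊤ : Ideal R) := by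
  intro P Q hP hQ
  exact (hP.1.1.ne_top (top_le_iff.1 hP.1.2)).elim

lemma primeHt_congr {R : Type*} [CommRing R] {P Q : Ideal R} (h : P = Q)
    (hP : P.IsPrime) (hQ : Q.IsPrime) : primeHt P hP = primeHt Q hQ := by
  subst h
  rfl

/-- A prime ideal is unmixed. -/
lemma unmixed_of_isPrime {R : Type*} [CommRing R] {I : Ideal R} (hI : I.IsPrime) :
    UnmixedIdeal I := by
  intro P Q hP hQ
  have : I.minimalPrimes = {I} := @Ideal.minimalPrimes_eq_subsingleton_self _ _ I hI
  have hPI : P = I := by rw [this] at hP; exact hP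
  have hQI : Q = I := by rw [this] at hQ; exact hQ
  exact primeHt_congr (hPI.trans hQI.symm) _ _

/-- The ideal generated by a set of variables is prime. -/
lemma isPrime_span_X_image (W : Set σ) :
    (Ideal.span (X '' W) : Ideal (MvPolynomial σ k)).IsPrime := by
  classical
  set g : σ → MvPolynomial σ k := fun i => if i ∈ W then 0 else X i with hg
  set φ := aeval (R := k) g with hφ
  have hker : Ideal.span (X '' W) = RingHom.ker φ := by
    apply le_antisymm
    · rw [Ideal.span_le]
      rintro q ⟨i, hi, rfl⟩
      rw [SetLike.mem_coe, RingHom.mem_ker]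
      show φ (X i) = 0
      rw [hφ, aeval_X, hg]
      simp [hi]
    · intro p hp
      rw [RingHom.mem_ker] at hp
      have key : ∀ q : MvPolynomial σ k, q - φ q ∈ Ideal.span (X '' W) := by
        intro q
        induction q using MvPolynomial.induction_on with
        | C a => rw [hφ]; simp
        | add p q hp hq =>
            have : p + q - φ (p + q) = (p - φ p) + (q - φ q) := by
              rw [map_add]; ring
            rw [this]
            exact Ideal.add_mem _ hp hq
        | mul_X q i hq =>
            rw [map_mul]
            have hXi : φ (X i) = g i := aeval_X (R := k) g i
            by_cases hi : i ∈ W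
            · have hgi : g i = 0 := by simp [hg, hi]
              rw [hXi, hgi, mul_zero, sub_zero]
              exact Ideal.mul_mem_left _ q (Ideal.subset_span ⟨i, hi, rfl⟩)
            · have hgi : g i = X i := by simp [hg, hi]
              rw [hXi, hgi]
              have : q * X i - φ q * X i = (q - φ q) * X i := by ring
              rw [this]
              exact Ideal.mul_mem_right _ _ hq
      have := key p
      rwa [hp, sub_zero] at this
  rw [hker]
  exact RingHom.ker_isPrime φ

end ONIGVD

end Alg
section Alg2

namespace ONIGVD

open MvPolynomial

variable {k : Type} [Field k] {σ : Type}

lemma sqSpan_le_span_X {F : Set (Finset σ)} {S : Finset σ} (htr : Tr F S) :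
    sqSpan k F ≤ Ideal.span (X '' (S : Set σ)) := by
  classical
  rw [sqSpan, Ideal.span_le]
  rintro q ⟨s, hs, rfl⟩
  obtain ⟨i, his, hiS⟩ := htr s hs
  rw [SetLike.mem_coe, sqMono, ← Finset.mul_prod_erase s _ his]
  exact Ideal.mul_mem_right _ _ (Ideal.subset_span ⟨i, Finset.mem_coe.2 hiS, rfl⟩)

lemma X_mem_span_X_iff {W : Set σ} {i : σ} :
    (X i : MvPolynomial σ k) ∈ Ideal.span (X '' W) ↔ i ∈ W := by
  classical
  constructor
  · intro h
    rw [mem_ideal_span_X_image] at h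
    obtain ⟨j, hj, hne⟩ := h (Finsupp.single i 1)
      (by rw [support_X]; exact Finset.mem_singleton_self _)
    rw [Finsupp.single_apply] at hne
    by_cases hij : i = j
    · exact hij ▸ hj
    · rw [if_neg hij] at hne; exact absurd rfl hne
  · intro h; exact Ideal.subset_span ⟨i, h, rfl⟩

lemma minimalPrime_sqSpan [Fintype σ] {F : Set (Finset σ)} {P : Ideal (MvPolynomial σ k)}
    (hP : P ∈ (sqSpan k F).minimalPrimes) :
    ∃ S : Finset σ, P = Ideal.span (X '' (S : Set σ)) ∧ MinTr F S := by
  classical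
  obtain ⟨⟨hPp, hPle⟩, hPmin⟩ := hP
  set S : Finset σ := Finset.univ.filter (fun i => X i ∈ P) with hS
  have hmemS : ∀ i, i ∈ S ↔ (X i : MvPolynomial σ k) ∈ P := by
    intro i; simp [hS]
  have htr : Tr F S := by
    intro e he
    have hmem : sqMono k e ∈ P := hPle (sqMono_mem_sqSpan he)
    rw [sqMono] at hmem
    obtain ⟨i, hie, hXi⟩ := (Ideal.IsPrime.prod_mem_iff (hp := hPp)).1 hmem
    exact ⟨i, hie, (hmemS i).2 hXi⟩
  have hle1 : Ideal.span (X '' (S : Set σ)) ≤ P := by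
    rw [Ideal.span_le]
    rintro q ⟨i, hi, rfl⟩
    exact (hmemS i).1 (Finset.mem_coe.1 hi)
  have hPeq : P = Ideal.span (X '' (S : Set σ)) :=
    le_antisymm (hPmin ⟨isPrime_span_X_image _, sqSpan_le_span_X htr⟩ hle1) hle1
  refine ⟨S, hPeq, htr, ?_⟩
  intro t ht htt
  have hsub : (t : Set σ) ⊆ (S : Set σ) := fun x hx => Finset.mem_coe.2 (ht.1 (Finset.mem_coe.1 hx))
  have h1 : P ≤ Ideal.span (X '' (t : Set σ)) :=
    hPmin ⟨isPrime_span_X_image _, sqSpan_le_span_X htt⟩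
      (le_trans (Ideal.span_mono (Set.image_mono hsub)) hle1)
  obtain ⟨i, hiS, hit⟩ := Finset.exists_of_ssubset ht
  have hXit : (X i : MvPolynomial σ k) ∈ Ideal.span (X '' (t : Set σ)) := h1 ((hmemS i).1 hiS)
  rw [X_mem_span_X_iff] at hXit
  exact hit (Finset.mem_coe.1 hXit)

/-- The order isomorphism of prime spectra induced by a ring isomorphism. -/
noncomputable def specOrderIso {R R' : Type*} [CommRing R] [CommRing R'] (ρ : R ≃+* R') :
    PrimeSpectrum R ≃o PrimeSpectrum R' where
  toFun P := ⟨P.asIdeal.comap (ρ.symm : R' →+* R),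
    Ideal.IsPrime.comap (K := P.asIdeal) (hK := P.2) _⟩
  invFun Q := ⟨Q.asIdeal.comap (ρ : R →+* R'),
    Ideal.IsPrime.comap (K := Q.asIdeal) (hK := Q.2) _⟩
  left_inv P := by
    apply PrimeSpectrum.ext
    ext x
    show ρ.symm (ρ x) ∈ P.asIdeal ↔ x ∈ P.asIdeal
    rw [RingEquiv.symm_apply_apply]
  right_inv Q := by
    apply PrimeSpectrum.ext
    ext x
    show ρ (ρ.symm x) ∈ Q.asIdeal ↔ x ∈ Q.asIdeal
    rw [RingEquiv.apply_symm_apply]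
  map_rel_iff' := by
    intro P Q
    show P.asIdeal.comap _ ≤ Q.asIdeal.comap _ ↔ P ≤ Q
    constructor
    · intro h x hx
      have hx' : ρ x ∈ P.asIdeal.comap (ρ.symm : R' →+* R) := by
        show ρ.symm (ρ x) ∈ P.asIdeal
        rw [RingEquiv.symm_apply_apply]
        exact hx
      have h3 : ρ.symm (ρ x) ∈ Q.asIdeal := h hx'
      rwa [RingEquiv.symm_apply_apply] at h3
    · intro h x hx
      rw [Ideal.mem_comap] at hx ⊢
      exact h hx

lemma primeHt_span_X_of_card_eq [Fintype σ] {S S' : Finset σ} (hcard : S.card = S'.card)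
    (h1 : (Ideal.span (X '' (S : Set σ)) : Ideal (MvPolynomial σ k)).IsPrime)
    (h2 : (Ideal.span (X '' (S' : Set σ)) : Ideal (MvPolynomial σ k)).IsPrime) :
    primeHt _ h1 = primeHt _ h2 := by
  classical
  have hc : Sᶜ.card = S'ᶜ.card := by rw [Finset.card_compl, Finset.card_compl, hcard]
  let e₁ : {x // x ∈ S} ≃ {x // x ∈ S'} := Finset.equivOfCardEq hcard
  let e₂ : {x // x ∈ Sᶜ} ≃ {x // x ∈ S'ᶜ} := Finset.equivOfCardEq hc
  let j₁ : ↥((S : Set σ)) ≃ {x // x ∈ S} := Equiv.subtypeEquivRight (fun x => Finset.mem_coe)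
  let j₁' : ↥((S' : Set σ)) ≃ {x // x ∈ S'} := Equiv.subtypeEquivRight (fun x => Finset.mem_coe)
  let j₂ : ↥((S : Set σ)ᶜ) ≃ {x // x ∈ Sᶜ} :=
    Equiv.subtypeEquivRight (fun x => by simp)
  let j₂' : ↥((S' : Set σ)ᶜ) ≃ {x // x ∈ S'ᶜ} :=
    Equiv.subtypeEquivRight (fun x => by simp)
  let eqv : σ ≃ σ := ((Equiv.Set.sumCompl ((S : Set σ))).symm.trans
    (Equiv.sumCongr ((j₁.trans e₁).trans j₁'.symm) ((j₂.trans e₂).trans j₂'.symm))).trans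
    (Equiv.Set.sumCompl ((S' : Set σ)))
  have hmem : ∀ x : σ, x ∈ S → eqv x ∈ S' := by
    intro x hx
    have h0 : (Equiv.Set.sumCompl ((S : Set σ))).symm x = Sum.inl ⟨x, Finset.mem_coe.2 hx⟩ :=
      Equiv.Set.sumCompl_symm_apply_of_mem (Finset.mem_coe.2 hx)
    show (Equiv.Set.sumCompl ((S' : Set σ)))
      ((Equiv.sumCongr _ _) ((Equiv.Set.sumCompl ((S : Set σ))).symm x)) ∈ S'
    rw [h0]
    simp only [Equiv.sumCongr_apply, Sum.map_inl, Equiv.Set.sumCompl_apply_inl]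
    exact Finset.mem_coe.1 (j₁'.symm (e₁ (j₁ ⟨x, Finset.mem_coe.2 hx⟩))).2
  have hmem' : ∀ x : σ, x ∉ S → eqv x ∉ S' := by
    intro x hx
    have h0 : (Equiv.Set.sumCompl ((S : Set σ))).symm x =
        Sum.inr ⟨x, by simp [hx]⟩ :=
      Equiv.Set.sumCompl_symm_apply_of_notMem (by simp [hx])
    show (Equiv.Set.sumCompl ((S' : Set σ)))
      ((Equiv.sumCongr _ _) ((Equiv.Set.sumCompl ((S : Set σ))).symm x)) ∉ S'
    rw [h0]
    simp only [Equiv.sumCongr_apply, Sum.map_inr, Equiv.Set.sumCompl_apply_inr]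
    have := (j₂'.symm (e₂ (j₂ ⟨x, by simp [hx]⟩))).2
    simp only [Set.mem_compl_iff, Finset.mem_coe] at this
    exact this
  have himg : eqv '' (S : Set σ) = (S' : Set σ) := by
    ext z
    constructor
    · rintro ⟨x, hx, rfl⟩
      exact Finset.mem_coe.2 (hmem x (Finset.mem_coe.1 hx))
    · intro hz
      refine ⟨eqv.symm z, ?_, eqv.apply_symm_apply z⟩
      by_contra hmemS
      exact hmem' _ (fun h => hmemS (Finset.mem_coe.2 h))
        (by rw [eqv.apply_symm_apply]; exact Finset.mem_coe.1 hz)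
  let ρ : MvPolynomial σ k ≃+* MvPolynomial σ k := (renameEquiv k eqv).toRingEquiv
  have hmap : Ideal.map (ρ : MvPolynomial σ k →+* MvPolynomial σ k)
      (Ideal.span (X '' (S : Set σ))) = Ideal.span (X '' (S' : Set σ)) := by
    rw [Ideal.map_span]
    congr 1
    rw [← Set.image_comp]
    have hco : (⇑(ρ : MvPolynomial σ k →+* MvPolynomial σ k)) ∘ (X : σ → MvPolynomial σ k)
        = X ∘ eqv := by
      funext i
      show ρ (X i) = X (eqv i)
      exact rename_X eqv i
    rw [hco, Set.image_comp, himg]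
  have hiso := Order.height_orderIso (specOrderIso ρ) ⟨_, h1⟩
  have heq : specOrderIso ρ ⟨_, h1⟩ = (⟨_, h2⟩ : PrimeSpectrum (MvPolynomial σ k)) := by
    apply PrimeSpectrum.ext
    show Ideal.comap (ρ.symm : MvPolynomial σ k →+* MvPolynomial σ k)
        (Ideal.span (X '' (S : Set σ))) = Ideal.span (X '' (S' : Set σ))
    exact (Ideal.comap_symm (I := Ideal.span (X '' (S : Set σ))) ρ).trans hmap
  rw [primeHt, primeHt, ← hiso, heq]

/-- A family with equicardinal minimal transversals generates an unmixed ideal. -/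
lemma unmixed_of_good [Fintype σ] {F : Set (Finset σ)} (hg : Good F) :
    UnmixedIdeal (sqSpan k F) := by
  intro P Q hP hQ
  obtain ⟨S, hPeq, hSmin⟩ := minimalPrime_sqSpan hP
  obtain ⟨S', hQeq, hS'min⟩ := minimalPrime_sqSpan hQ
  have hcard := hg S S' hSmin hS'min
  calc primeHt P hP.1.1 = primeHt _ (isPrime_span_X_image (k := k) ((S : Set σ))) :=
        primeHt_congr hPeq _ _
    _ = primeHt _ (isPrime_span_X_image (k := k) ((S' : Set σ))) :=
        primeHt_span_X_of_card_eq hcard _ _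
    _ = primeHt Q hQ.1.1 := primeHt_congr hQeq.symm _ _

end ONIGVD

end Alg2
section Tree

namespace ONIGVD

open SimpleGraph

variable {V : Type} {G : SimpleGraph V}

lemma isPath_concat' {u v w : V} {p : G.Walk u v} (hp : p.IsPath) (h : G.Adj v w)
    (hw : w ∉ p.support) : (p.concat h).IsPath := by
  rw [Walk.isPath_def, Walk.support_concat, List.nodup_append]
  rw [Walk.isPath_def] at hp
  refine ⟨hp, List.nodup_singleton _, ?_⟩
  intro a ha b hb hab
  rw [List.mem_singleton] at hb
  exact hw (hb ▸ hab ▸ ha)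

lemma dist_split {r x c : V} (p : G.Walk r x) (hc : c ∈ p.support) :
    G.dist r c + G.dist c x ≤ p.length := by
  calc G.dist r c + G.dist c x ≤ (p.takeUntil c hc).length + (p.dropUntil c hc).length :=
        Nat.add_le_add (SimpleGraph.dist_le _) (SimpleGraph.dist_le _)
    _ = p.length := by rw [← Walk.length_append, p.take_spec hc]

lemma tree_adj_dist_ne (ht : G.IsTree) (r : V) {x c : V} (h : G.Adj x c) :
    G.dist r x ≠ G.dist r c := by
  intro hEq
  obtain ⟨p, hp, hpl⟩ := ht.isConnected.exists_path_of_dist r c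
  obtain ⟨q, hq, hql⟩ := ht.isConnected.exists_path_of_dist r x
  have hcq : c ∉ q.support := by
    intro hc
    have h1 := dist_split q hc
    rw [hql, ← hEq] at h1
    have h2 : G.dist c x = 0 := by omega
    have h3 : c = x := (ht.isConnected.dist_eq_zero_iff).1 h2
    exact G.loopless.irrefl x (h3 ▸ h)
  have hpath := isPath_concat' hq h hcq
  have huniq := (ht.existsUnique_path r c).unique hpath hp
  have hlen := congrArg Walk.length huniq
  rw [Walk.length_concat, hql, hpl, hEq] at hlen
  omega

lemma tree_unique_parent (ht : G.IsTree) (r : V) {c x x' : V} (hx : G.Adj x c)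
    (hx' : G.Adj x' c) (hdx : G.dist r x + 1 = G.dist r c)
    (hdx' : G.dist r x' + 1 = G.dist r c) : x = x' := by
  obtain ⟨q, hq, hql⟩ := ht.isConnected.exists_path_of_dist r x
  obtain ⟨q', hq', hql'⟩ := ht.isConnected.exists_path_of_dist r x'
  have hcq : c ∉ q.support := by
    intro hc
    have h1 := dist_split q hc
    rw [hql] at h1
    omega
  have hcq' : c ∉ q'.support := by
    intro hc
    have h1 := dist_split q' hc
    rw [hql'] at h1
    omega
  have h1 := isPath_concat' hq hx hcq
  have h2 := isPath_concat' hq' hx' hcq'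
  have heq := (ht.existsUnique_path r c).unique h1 h2
  obtain ⟨hv, -⟩ := Walk.concat_inj heq
  exact hv

/-- A family of finsets of `σ` is tree-like (w.r.t. `ι : σ → V` and the graph `G`) if each
edge can be assigned a distinct "center" in `V` adjacent to all of its elements. -/
def TreeLike (G : SimpleGraph V) {σ : Type} (ι : σ → V) (F : Set (Finset σ)) : Prop :=
  ∃ c : Finset σ → V, Set.InjOn c F ∧ ∀ e ∈ F, ∀ x ∈ e, G.Adj (c e) (ι x)

/-- In a tree-like family there is always an edge all of whose elements, except possibly
one, are private to that edge. -/
lemma exists_private_edge (ht : G.IsTree) {σ : Type} [Fintype σ] {ι : σ → V}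
    (hι : Function.Injective ι) {F : Set (Finset σ)} (hF : TreeLike G ι F)
    (hne : F.Nonempty) (hE : ∀ e ∈ F, e.Nonempty) :
    ∃ e ∈ F, ∃ y ∈ e, ∀ x ∈ e, x ≠ y → ∀ f ∈ F, f ≠ e → x ∉ f := by
  classical
  obtain ⟨c, hcinj, hadj⟩ := hF
  obtain ⟨e₀, he₀⟩ := hne
  set r := c e₀ with hr
  have hFfin : F.Finite := Set.toFinite F
  obtain ⟨e, he, hmax⟩ := Finset.exists_max_image hFfin.toFinset (fun f => G.dist r (c f))
    ⟨e₀, hFfin.mem_toFinset.2 he₀⟩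
  have he' : e ∈ F := hFfin.mem_toFinset.1 he
  have hmax' : ∀ f ∈ F, G.dist r (c f) ≤ G.dist r (c e) := fun f hf =>
    hmax f (hFfin.mem_toFinset.2 hf)
  have key : ∀ z ∈ e, (∃ f ∈ F, f ≠ e ∧ z ∈ f) → G.dist r (ι z) + 1 = G.dist r (c e) := by
    rintro z hz ⟨f, hf, hfe, hzf⟩
    have hadj_e : G.Adj (c e) (ι z) := hadj e he' z hz
    have hadj_f : G.Adj (c f) (ι z) := hadj f hf z hzf
    have hne_cf : c f ≠ c e := fun hcc => hfe (hcinj hf he' hcc)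
    have hd1 : G.dist r (ι z) ≠ G.dist r (c e) :=
      tree_adj_dist_ne ht r (G.adj_symm hadj_e)
    have hub : G.dist r (ι z) ≤ G.dist r (c e) + 1 := by
      calc G.dist r (ι z) ≤ G.dist r (c e) + G.dist (c e) (ι z) :=
            ht.isConnected.dist_triangle
        _ = G.dist r (c e) + 1 := by rw [dist_eq_one_iff_adj.2 hadj_e]
    have hlb : G.dist r (c e) ≤ G.dist r (ι z) + 1 := by
      calc G.dist r (c e) ≤ G.dist r (ι z) + G.dist (ι z) (c e) :=
            ht.isConnected.dist_triangle
        _ = G.dist r (ι z) + 1 := by rw [dist_eq_one_iff_adj.2 (G.adj_symm hadj_e)]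
    rcases Nat.lt_or_ge (G.dist r (ι z)) (G.dist r (c e)) with hlt | hge
    · omega
    · exfalso
      have hdz : G.dist r (ι z) = G.dist r (c e) + 1 := by omega
      have hdcf_ub : G.dist r (c f) ≤ G.dist r (c e) := hmax' f hf
      have hdcf_lb : G.dist r (ι z) ≤ G.dist r (c f) + 1 := by
        calc G.dist r (ι z) ≤ G.dist r (c f) + G.dist (c f) (ι z) :=
              ht.isConnected.dist_triangle
          _ = G.dist r (c f) + 1 := by rw [dist_eq_one_iff_adj.2 hadj_f]
      have hdcf : G.dist r (c f) + 1 = G.dist r (ι z) := by omega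
      have hdce : G.dist r (c e) + 1 = G.dist r (ι z) := by omega
      exact hne_cf (tree_unique_parent ht r hadj_f hadj_e hdcf hdce)
  by_cases hhub : ∃ z ∈ e, ∃ f ∈ F, f ≠ e ∧ z ∈ f
  · obtain ⟨y, hye, hyhub⟩ := hhub
    refine ⟨e, he', y, hye, ?_⟩
    intro x hxe hxy f hf hfe hxf
    refine hxy (hι ?_)
    exact tree_unique_parent ht r (G.adj_symm (hadj e he' x hxe))
      (G.adj_symm (hadj e he' y hye)) (key x hxe ⟨f, hf, hfe, hxf⟩) (key y hye hyhub)
  · push_neg at hhub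
    obtain ⟨y, hy⟩ := hE e he'
    exact ⟨e, he', y, hy, fun x hxe _ f hf hfe => hhub x hxe f hf hfe⟩

end ONIGVD

end Tree
section Meas

namespace ONIGVD

variable {σ : Type} [Fintype σ]

/-- Total size measure of a family. -/
noncomputable def meas (F : Set (Finset σ)) : ℕ :=
  ∑ e ∈ (Set.toFinite F).toFinset, (e.card + 1)

lemma sum_image_le' {α β : Type} [DecidableEq β] (s : Finset α) (g : α → β) (f : β → ℕ) :
    ∑ b ∈ s.image g, f b ≤ ∑ a ∈ s, f (g a) := by
  classical
  induction s using Finset.induction_on with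
  | empty => simp
  | @insert a s ha ih =>
      rw [Finset.image_insert, Finset.sum_insert ha]
      by_cases h : g a ∈ s.image g
      · rw [Finset.insert_eq_self.2 h]
        omega
      · rw [Finset.sum_insert h]
        omega

lemma meas_NFam_lt {F : Set (Finset σ)} {y : σ} {e : Finset σ} (he : e ∈ F) (hy : y ∈ e) :
    meas (NFam y F) < meas F := by
  apply Finset.sum_lt_sum_of_subset
  · intro f hf
    rw [Set.Finite.mem_toFinset] at hf ⊢
    exact hf.1
  · exact (Set.Finite.mem_toFinset _).2 he
  · rw [Set.Finite.mem_toFinset]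
    rintro ⟨-, hye⟩
    exact hye hy
  · omega
  · intro j _ _
    omega

lemma meas_dropVar (y : σ) {H : Set (Finset σ)} (hH : ∀ e ∈ H, y ∉ e) :
    meas ((dropVar y) '' H) = meas H := by
  classical
  rw [meas, meas]
  have himg : (Set.toFinite ((dropVar y) '' H)).toFinset
      = (Set.toFinite H).toFinset.image (dropVar y) := by
    ext f
    simp only [Set.Finite.mem_toFinset, Set.mem_image, Finset.mem_image]
  rw [himg, Finset.sum_image]
  · apply Finset.sum_congr rfl
    intro f hf
    rw [Set.Finite.mem_toFinset] at hf
    have hc := congrArg Finset.card (dropVar_map_of_notMem (hH f hf))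
    rw [Finset.card_map] at hc
    rw [hc]
  · intro a ha b hb hab
    rw [Finset.mem_coe, Set.Finite.mem_toFinset] at ha hb
    have := congrArg (Finset.map (emb y)) hab
    rwa [dropVar_map_of_notMem (hH a ha), dropVar_map_of_notMem (hH b hb)] at this

lemma meas_CFam_lt {F : Set (Finset σ)} {y : σ} {e : Finset σ} (he : e ∈ F) (hy : y ∈ e) :
    meas (CFam y F) < meas F := by
  classical
  have h1 : (Set.toFinite (CFam y F)).toFinset
      = (Set.toFinite F).toFinset.image (fun s => s.erase y) := by
    ext f
    simp only [Set.Finite.mem_toFinset, CFam, Set.mem_image, Finset.mem_image]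
  rw [meas, meas, h1]
  calc ∑ f ∈ (Set.toFinite F).toFinset.image (fun s => s.erase y), (f.card + 1)
      ≤ ∑ a ∈ (Set.toFinite F).toFinset, ((a.erase y).card + 1) := sum_image_le' _ _ _
    _ < ∑ a ∈ (Set.toFinite F).toFinset, (a.card + 1) := by
        apply Finset.sum_lt_sum
        · intro i _
          have := Finset.card_erase_le (s := i) (a := y)
          omega
        · refine ⟨e, (Set.Finite.mem_toFinset _).2 he, ?_⟩
          have := Finset.card_erase_of_mem hy
          have hpos : 0 < e.card := Finset.card_pos.2 ⟨y, hy⟩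
          omega

lemma meas_dropC_lt {F : Set (Finset σ)} {y : σ} {e : Finset σ} (he : e ∈ F) (hy : y ∈ e) :
    meas ((dropVar y) '' (CFam y F)) < meas F := by
  rw [meas_dropVar y (CFam_notMem F)]
  exact meas_CFam_lt he hy

lemma meas_dropN_lt {F : Set (Finset σ)} {y : σ} {e : Finset σ} (he : e ∈ F) (hy : y ∈ e) :
    meas ((dropVar y) '' (NFam y F)) < meas F := by
  rw [meas_dropVar y (NFam_notMem F)]
  exact meas_NFam_lt he hy

end ONIGVD

end Meas
section Master

namespace ONIGVD

variable {V : Type} {G : SimpleGraph V} {σ : Type}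

lemma treeLike_dropC {ι : σ → V} {F : Set (Finset σ)} (h : TreeLike G ι F) (y : σ) :
    TreeLike G (fun x : {x : σ // x ≠ y} => ι x.1) ((dropVar y) '' (CFam y F)) := by
  classical
  obtain ⟨c, hinj, hadj⟩ := h
  have hex : ∀ g ∈ (dropVar y) '' (CFam y F), ∃ e, e ∈ F ∧ dropVar y (e.erase y) = g := by
    rintro g ⟨s, ⟨e, he, rfl⟩, rfl⟩
    exact ⟨e, he, rfl⟩
  refine ⟨fun g => if h : ∃ e, e ∈ F ∧ dropVar y (e.erase y) = g then c h.choose else c ∅,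
    ?_, ?_⟩
  · intro g₁ hg₁ g₂ hg₂ hcc
    have h₁ := hex g₁ hg₁
    have h₂ := hex g₂ hg₂
    simp only [dif_pos h₁, dif_pos h₂] at hcc
    have heq := hinj h₁.choose_spec.1 h₂.choose_spec.1 hcc
    rw [← h₁.choose_spec.2, ← h₂.choose_spec.2, heq]
  · intro g hg x hx
    have h₁ := hex g hg
    simp only [dif_pos h₁]
    have hxe : (x : σ) ∈ h₁.choose := by
      rw [← h₁.choose_spec.2] at hx
      exact Finset.mem_of_mem_erase (Finset.mem_subtype.1 hx)
    exact hadj _ h₁.choose_spec.1 _ hxe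

lemma treeLike_dropN {ι : σ → V} {F : Set (Finset σ)} (h : TreeLike G ι F) (y : σ) :
    TreeLike G (fun x : {x : σ // x ≠ y} => ι x.1) ((dropVar y) '' (NFam y F)) := by
  classical
  obtain ⟨c, hinj, hadj⟩ := h
  have hex : ∀ g ∈ (dropVar y) '' (NFam y F), ∃ e, (e ∈ F ∧ y ∉ e) ∧ dropVar y e = g := by
    rintro g ⟨s, hs, rfl⟩
    exact ⟨s, hs, rfl⟩
  refine ⟨fun g => if h : ∃ e, (e ∈ F ∧ y ∉ e) ∧ dropVar y e = g then c h.choose else c ∅,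
    ?_, ?_⟩
  · intro g₁ hg₁ g₂ hg₂ hcc
    have h₁ := hex g₁ hg₁
    have h₂ := hex g₂ hg₂
    simp only [dif_pos h₁, dif_pos h₂] at hcc
    have heq := hinj h₁.choose_spec.1.1 h₂.choose_spec.1.1 hcc
    rw [← h₁.choose_spec.2, ← h₂.choose_spec.2, heq]
  · intro g hg x hx
    have h₁ := hex g hg
    simp only [dif_pos h₁]
    have hxe : (x : σ) ∈ h₁.choose := by
      rw [← h₁.choose_spec.2] at hx
      exact Finset.mem_subtype.1 hx
    exact hadj _ h₁.choose_spec.1.1 _ hxe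

lemma master (k : Type) [Field k] (ht : G.IsTree) :
    ∀ (n : ℕ) (σ : Type) (inst : Fintype σ) (ι : σ → V), Function.Injective ι →
      ∀ F : Set (Finset σ), @meas σ inst F = n → TreeLike G ι F → Good F →
      IsGVD k σ (sqSpan k F) := by
  intro n
  induction n using Nat.strong_induction_on with
  | _ n IH =>
  intro σ inst ι hι F hmeas hTL hGood
  letI := inst
  by_cases htop : (∅ : Finset σ) ∈ F
  · rw [sqSpan_eq_top htop]
    exact IsGVD.base σ ⊤ unmixed_top (Or.inl rfl)
  by_cases hsing : ∀ e ∈ F, e.card = 1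
  · rw [sqSpan_of_singletons hsing]
    exact IsGVD.base σ _ (unmixed_of_isPrime (isPrime_span_X_image _)) (Or.inr ⟨_, rfl⟩)
  have hEne : ∀ e ∈ F, e.Nonempty := fun e he =>
    Finset.nonempty_iff_ne_empty.2 (fun h => htop (h ▸ he))
  have hFne : F.Nonempty := by
    by_contra hcon
    rw [Set.not_nonempty_iff_eq_empty] at hcon
    subst hcon
    exact hsing (fun e he => absurd he (Set.notMem_empty e))
  obtain ⟨e, he, y, hy, hpriv⟩ := exists_private_edge ht hι hTL hFne hEne
  refine IsGVD.step σ _ (unmixed_of_good hGood) F rfl y (sqSpan_decomposition F y) ?_ ?_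
  · exact IH _ (hmeas ▸ meas_dropC_lt he hy) _ inferInstance _
      (hι.comp Subtype.val_injective) _ rfl (treeLike_dropC hTL y)
      (good_dropVar (CFam_notMem F) (good_CFam hGood))
  · exact IH _ (hmeas ▸ meas_dropN_lt he hy) _ inferInstance _
      (hι.comp Subtype.val_injective) _ rfl (treeLike_dropN hTL y)
      (good_dropVar (NFam_notMem F) (good_NFam he hy hpriv hGood))

end ONIGVD

end Master

/-- **Theorem**: the open neighborhood ideal of a finite TD-unmixed tree is
geometrically vertex decomposable. -/
theorem ONI_isGVD (k : Type) [Field k] {V : Type} [Fintype V] (G : SimpleGraph V)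
    (htree : G.IsTree) (hunm : TDUnmixed G) :
    IsGVD k V (ONI k G) := by
  classical
  open ONIGVD in
  set F : Set (Finset V) := {s | ∃ v : V, s = nbrFinset G v} with hF
  have hTL : ONIGVD.TreeLike G id F := by
    refine ⟨fun e => if h : ∃ v : V, e = nbrFinset G v then h.choose
      else htree.isConnected.nonempty.some, ?_, ?_⟩
    · intro e₁ h₁ e₂ h₂ hcc
      have h₁' : ∃ v, e₁ = nbrFinset G v := h₁
      have h₂' : ∃ v, e₂ = nbrFinset G v := h₂
      simp only [dif_pos h₁', dif_pos h₂'] at hcc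
      calc e₁ = nbrFinset G h₁'.choose := h₁'.choose_spec
        _ = nbrFinset G h₂'.choose := by rw [hcc]
        _ = e₂ := h₂'.choose_spec.symm
    · intro e heF x hx
      have h₁ : ∃ v, e = nbrFinset G v := heF
      simp only [dif_pos h₁]
      have hx' : x ∈ nbrFinset G h₁.choose := h₁.choose_spec ▸ hx
      rw [nbrFinset, Set.Finite.mem_toFinset] at hx'
      exact hx'
  have hGood : ONIGVD.Good F := by
    have key : ∀ t : Finset V, ONIGVD.MinTr F t → IsMinTDSet G ↑t := by
      intro t hmt
      constructor
      · apply Set.eq_univ_of_forall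
        intro u
        obtain ⟨x, hxe, hxt⟩ := hmt.1 (nbrFinset G u) ⟨u, rfl⟩
        refine ⟨x, Finset.mem_coe.2 hxt, ?_⟩
        have hx' : x ∈ G.neighborSet u := by
          rwa [nbrFinset, Set.Finite.mem_toFinset] at hxe
        exact G.adj_symm hx'
      · intro S' hS' hTD
        set t' : Finset V := t.filter (fun v => v ∈ S') with ht'
        have hcoe : (t' : Set V) = S' := by
          ext v
          simp only [ht', Finset.coe_filter, Set.mem_setOf_eq]
          constructor
          · rintro ⟨-, hv⟩
            exact hv
          · intro hv
            exact ⟨Finset.mem_coe.1 (hS'.1 hv), hv⟩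
        have htt : t' ⊂ t := by
          constructor
          · exact Finset.filter_subset _ _
          · intro hsub
            apply hS'.2
            intro v hv
            rw [← hcoe]
            exact Finset.mem_coe.2 (hsub (Finset.mem_coe.1 hv))
        apply hmt.2 t' htt
        rintro e ⟨u, rfl⟩
        have hu : u ∈ nbhd G S' := by rw [hTD]; trivial
        obtain ⟨v, hvS', hadj⟩ := hu
        refine ⟨v, ?_, ?_⟩
        · rw [nbrFinset, Set.Finite.mem_toFinset]
          exact G.adj_symm hadj
        · rw [← Finset.mem_coe, hcoe]
          exact hvS'
    intro t₁ t₂ h₁ h₂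
    have hcards := hunm ↑t₁ ↑t₂ (key t₁ h₁) (key t₂ h₂)
    rwa [Set.ncard_coe_finset, Set.ncard_coe_finset] at hcards
  show IsGVD k V (sqSpan k F)
  exact ONIGVD.master k htree (ONIGVD.meas F) V inferInstance id Function.injective_id
    F rfl hTL hGood
end

section
/- Let T be a finite TD-unmixed tree. Then the stable complex S(T) is a pure vertex decomposable simplicial complex. -/
open scoped Classical

section ComplexDefs

variable {V : Type}

/-- The facets of a simplicial complex (represented as its set of faces):
the maximal faces. -/
def facetsCx (Δ : Set (Finset V)) : Set (Finset V) :=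
  {s ∈ Δ | ∀ t ∈ Δ, s ⊆ t → s = t}

/-- A simplicial complex is pure if all of its facets have the same cardinality. -/
def PureCx (Δ : Set (Finset V)) : Prop :=
  ∀ s ∈ facetsCx Δ, ∀ t ∈ facetsCx Δ, s.card = t.card

/-- The deletion of a vertex from a simplicial complex. -/
def delCx (Δ : Set (Finset V)) (v : V) : Set (Finset V) := {s ∈ Δ | v ∉ s}

/-- The link of a vertex in a simplicial complex. -/
noncomputable def linkCx (Δ : Set (Finset V)) (v : V) : Set (Finset V) :=
  {s ∈ Δ | v ∉ s ∧ insert v s ∈ Δ}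

/-- A shedding vertex: every facet of the deletion is a facet of the complex. -/
def IsSheddingVx (Δ : Set (Finset V)) (v : V) : Prop :=
  ∀ F ∈ facetsCx (delCx Δ v), F ∈ facetsCx Δ

/-- Vertex decomposability of a (pure) simplicial complex: `Δ` is a simplex or the empty
complex, or it has a shedding vertex whose deletion and link are vertex decomposable. -/
inductive VertexDecomposable : Set (Finset V) → Prop where
  | simplex (F : Finset V) : VertexDecomposable {s | s ⊆ F}
  | empty : VertexDecomposable (∅ : Set (Finset V))
  | shed (Δ : Set (Finset V)) (v : V) (hshed : IsSheddingVx Δ v)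
      (hdel : VertexDecomposable (delCx Δ v)) (hlink : VertexDecomposable (linkCx Δ v)) :
      VertexDecomposable Δ

end ComplexDefs

/-- The stable complex of a graph: faces are the complements of total dominating sets. -/
def stableCx {V : Type} [Fintype V] (G : SimpleGraph V) : Set (Finset V) :=
  {s : Finset V | ∃ D : Set V, IsTDSet G D ∧ (↑s : Set V) = Set.univ \ D}


namespace TDAux

set_option linter.unusedSectionVars false

section Engine

variable {V : Type} [Fintype V]


variable {V : Type} [Fintype V]

/-- The independence complex of an edge family `E`, restricted to ground set `A`. -/
def cxF (E : Finset (Finset V)) (A : Finset V) : Set (Finset V) :=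
  {s | s ⊆ A ∧ ∀ e ∈ E, ¬ e ⊆ s}

/-- Berge-acyclicity, in edge-counting form. -/
def AcycF (E : Finset (Finset V)) : Prop :=
  ∀ F ⊆ E, F.Nonempty → (∑ e ∈ F, e.card) + 1 ≤ (F.sup id).card + F.card

lemma sum_image_le' {α β : Type} [DecidableEq β] (F : Finset α) (f : α → β) (h : β → ℕ) :
    ∑ b ∈ F.image f, h b ≤ ∑ a ∈ F, h (f a) := by
  induction F using Finset.induction_on with
  | empty => simp
  | @insert a F ha ih =>
    rw [Finset.image_insert, Finset.sum_insert ha]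
    by_cases hfa : f a ∈ F.image f
    · rw [Finset.insert_eq_self.2 hfa]
      omega
    · rw [Finset.sum_insert hfa]
      omega

lemma exists_lift {α β : Type} [DecidableEq α] [DecidableEq β] {s : Finset α} {f : α → β} :
    ∀ {F' : Finset β}, F' ⊆ s.image f →
    ∃ F ⊆ s, F.image f = F' ∧ F.card = F'.card := by
  classical
  intro F'
  induction F' using Finset.induction_on with
  | empty => exact fun _ => ⟨∅, by simp⟩
  | @insert b F' hb ih =>
    intro hF'
    obtain ⟨F, hFs, himg, hcard⟩ := ih (subset_trans (Finset.subset_insert _ _) hF')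
    have hbmem : b ∈ s.image f := hF' (Finset.mem_insert_self _ _)
    obtain ⟨a, has, hfa⟩ := Finset.mem_image.1 hbmem
    have haF : a ∉ F := by
      intro haF
      exact hb (himg ▸ hfa ▸ Finset.mem_image_of_mem f haF)
    refine ⟨insert a F, ?_, ?_, ?_⟩
    · exact Finset.insert_subset has hFs
    · rw [Finset.image_insert, hfa, himg]
    · rw [Finset.card_insert_of_notMem haF, hcard, Finset.card_insert_of_notMem hb]

lemma AcycF.mono {E E' : Finset (Finset V)} (h : AcycF E) (hsub : E' ⊆ E) : AcycF E' :=
  fun F hF => h F (hF.trans hsub)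

lemma sup_image_erase {F : Finset (Finset V)} {x : V} :
    (F.image (fun e => e.erase x)).sup id = (F.sup id).erase x := by
  ext y
  simp only [Finset.mem_sup, Finset.mem_image, id_eq, Finset.mem_erase]
  constructor
  · rintro ⟨f, ⟨e, he, rfl⟩, hy⟩
    rcases Finset.mem_erase.1 hy with ⟨hyx, hye⟩
    exact ⟨hyx, e, he, hye⟩
  · rintro ⟨hyx, e, he, hye⟩
    exact ⟨e.erase x, ⟨e, he, rfl⟩, Finset.mem_erase.2 ⟨hyx, hye⟩⟩

lemma AcycF.image_erase {E : Finset (Finset V)} (h : AcycF E) (x : V) :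
    AcycF (E.image (fun e => e.erase x)) := by
  intro F' hF' hne
  obtain ⟨F, hFE, himg, hcard⟩ := exists_lift hF'
  have hFne : F.Nonempty := by
    rw [← Finset.card_pos, hcard, Finset.card_pos]; exact hne
  have hsum : ∑ f ∈ F', f.card ≤ ∑ e ∈ F, (e.erase x).card := by
    rw [← himg]; exact sum_image_le' _ _ _
  have hsup : F'.sup id = (F.sup id).erase x := by rw [← himg]; exact sup_image_erase
  have hac := h F hFE hFne
  by_cases hx : ∃ e ∈ F, x ∈ e
  · obtain ⟨e₀, he₀, hxe₀⟩ := hx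
    have he₀c : (e₀.erase x).card < e₀.card := by
      rw [Finset.card_erase_of_mem hxe₀]
      have : 0 < e₀.card := Finset.card_pos.2 ⟨x, hxe₀⟩
      omega
    have hstrict : ∑ e ∈ F, (e.erase x).card < ∑ e ∈ F, e.card :=
      Finset.sum_lt_sum (fun i _ => Finset.card_erase_le) ⟨e₀, he₀, he₀c⟩
    have hxsup : x ∈ F.sup id := Finset.mem_sup.2 ⟨e₀, he₀, hxe₀⟩
    have hsupc : ((F.sup id).erase x).card + 1 = (F.sup id).card := by
      rw [Finset.card_erase_of_mem hxsup]
      have : 0 < (F.sup id).card := Finset.card_pos.2 ⟨x, hxsup⟩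
      omega
    rw [hsup, ← hcard]
    omega
  · push_neg at hx
    have himgF : F.image (fun e => e.erase x) = F := by
      apply (Finset.image_congr ?_).trans Finset.image_id
      intro e he
      exact Finset.erase_eq_of_notMem (hx e he)
    have hFF : F' = F := by rw [← himg, himgF]
    subst hFF
    have hxsup : x ∉ F'.sup id := by
      intro hc
      obtain ⟨e, he, hxe⟩ := Finset.mem_sup.1 hc
      exact hx e he hxe
    rw [hsup, Finset.erase_eq_of_notMem hxsup]
    exact hac


lemma dcount (E : Finset (Finset V)) (T : Finset V) :
    ∑ e ∈ E, (e ∩ T).card = ∑ y ∈ T, (E.filter (fun e => y ∈ e)).card := by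
  have h1 : ∀ e : Finset V, (e ∩ T).card = ∑ y ∈ T, if y ∈ e then 1 else 0 := by
    intro e
    rw [← Finset.card_filter]
    congr 1
    rw [Finset.filter_mem_eq_inter, Finset.inter_comm]
  have h2 : ∀ y : V, (E.filter (fun e => y ∈ e)).card = ∑ e ∈ E, if y ∈ e then 1 else 0 :=
    fun y => Finset.card_filter _ _
  simp only [h1, h2]
  exact Finset.sum_comm

lemma pendant {E : Finset (Finset V)} (hE : E.Nonempty) (hne : ∅ ∉ E) (hac : AcycF E) :
    ∃ e ∈ E, ∃ x ∈ e, ∀ y ∈ e, y ≠ x → ∀ f ∈ E, y ∈ f → f = e := by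
  by_contra hcon
  push_neg at hcon
  set U := E.sup id with hU
  set dg := fun y => (E.filter (fun e => y ∈ e)).card with hdg
  -- every edge has at least 2 vertices of degree ≥ 2
  have hsh : ∀ y : V, ∀ f ∈ E, ∀ g ∈ E, f ≠ g → y ∈ f → y ∈ g → 2 ≤ dg y := by
    intro y f hf g hg hfg hyf hyg
    have : ({f, g} : Finset (Finset V)) ⊆ E.filter (fun e => y ∈ e) := by
      intro e he
      rcases Finset.mem_insert.1 he with rfl | he
      · exact Finset.mem_filter.2 ⟨hf, hyf⟩
      · rw [Finset.mem_singleton.1 he]; exact Finset.mem_filter.2 ⟨hg, hyg⟩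
    have hle := Finset.card_le_card this
    rw [Finset.card_pair hfg] at hle
    exact hle
  have hshared2 : ∀ e ∈ E, 2 ≤ (e.filter (fun y => 2 ≤ dg y)).card := by
    intro e he
    have hene : e.Nonempty := Finset.nonempty_iff_ne_empty.2 (fun h => hne (h ▸ he))
    obtain ⟨x0, hx0⟩ := hene
    obtain ⟨y1, hy1e, _, f1, hf1, hy1f1, hf1e⟩ := hcon e he x0 hx0
    have hdy1 : 2 ≤ dg y1 := hsh y1 f1 hf1 e he hf1e hy1f1 hy1e
    obtain ⟨y2, hy2e, hy21, f2, hf2, hy2f2, hf2e⟩ := hcon e he y1 hy1e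
    have hdy2 : 2 ≤ dg y2 := hsh y2 f2 hf2 e he hf2e hy2f2 hy2e
    have : ({y2, y1} : Finset V) ⊆ e.filter (fun y => 2 ≤ dg y) := by
      intro z hz
      rcases Finset.mem_insert.1 hz with rfl | hz
      · exact Finset.mem_filter.2 ⟨hy2e, hdy2⟩
      · rw [Finset.mem_singleton.1 hz]; exact Finset.mem_filter.2 ⟨hy1e, hdy1⟩
    have hle := Finset.card_le_card this
    rw [Finset.card_pair hy21] at hle
    exact hle
  -- double counting
  have hdc : ∑ e ∈ E, e.card = ∑ y ∈ U, dg y := by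
    have : ∀ e ∈ E, e ∩ U = e := by
      intro e he
      apply Finset.inter_eq_left.2
      exact Finset.le_sup (f := id) he
    rw [← Finset.sum_congr rfl (fun e he => congrArg Finset.card (this e he))]
    exact dcount E U
  set S := U.filter (fun y => 2 ≤ dg y) with hS
  set P := U.filter (fun y => ¬ 2 ≤ dg y) with hP
  have hsplit : ∑ y ∈ S, dg y + ∑ y ∈ P, dg y = ∑ y ∈ U, dg y :=
    Finset.sum_filter_add_sum_filter_not U _ dg
  have hcardsplit : S.card + P.card = U.card := Finset.card_filter_add_card_filter_not _
  have hPdeg : P.card ≤ ∑ y ∈ P, dg y := by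
    rw [Finset.card_eq_sum_ones]
    apply Finset.sum_le_sum
    intro y hy
    have hyU : y ∈ U := (Finset.mem_filter.1 hy).1
    obtain ⟨e, he, hye⟩ := Finset.mem_sup.1 hyU
    have : (E.filter (fun e => y ∈ e)).Nonempty := ⟨e, Finset.mem_filter.2 ⟨he, hye⟩⟩
    exact Finset.card_pos.2 this
  have hSdeg : 2 * S.card ≤ ∑ y ∈ S, dg y := by
    calc 2 * S.card = ∑ _y ∈ S, 2 := by rw [Finset.sum_const, smul_eq_mul, mul_comm]
    _ ≤ ∑ y ∈ S, dg y := Finset.sum_le_sum (fun y hy => (Finset.mem_filter.1 hy).2)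
  have hSdeg2 : 2 * E.card ≤ ∑ y ∈ S, dg y := by
    rw [hdg, ← dcount E S]
    calc 2 * E.card = ∑ _e ∈ E, 2 := by rw [Finset.sum_const, smul_eq_mul, mul_comm]
    _ ≤ ∑ e ∈ E, (e ∩ S).card := by
        apply Finset.sum_le_sum
        intro e he
        have hsub : e.filter (fun y => 2 ≤ dg y) ⊆ e ∩ S := by
          intro y hy
          rcases Finset.mem_filter.1 hy with ⟨hye, hdy⟩
          refine Finset.mem_inter.2 ⟨hye, Finset.mem_filter.2 ⟨?_, hdy⟩⟩
          exact Finset.mem_sup.2 ⟨e, he, hye⟩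
        exact le_trans (hshared2 e he) (Finset.card_le_card hsub)
  have hfinal := hac E (subset_refl E) hE
  rw [← hU] at hfinal
  omega

lemma cxF_del (E : Finset (Finset V)) (A : Finset V) (x : V) :
    delCx (cxF E A) x = cxF (E.filter (fun e => x ∉ e)) (A.erase x) := by
  ext s
  constructor
  · rintro ⟨⟨hsA, hs⟩, hxs⟩
    refine ⟨fun y hy => Finset.mem_erase.2 ⟨fun h => hxs (h ▸ hy), hsA hy⟩, ?_⟩
    intro e he
    exact hs e (Finset.mem_filter.1 he).1
  · rintro ⟨hsA, hs⟩
    have hxs : x ∉ s := fun h => (Finset.mem_erase.1 (hsA h)).1 rfl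
    refine ⟨⟨fun y hy => (Finset.mem_erase.1 (hsA hy)).2, ?_⟩, hxs⟩
    intro e he hes
    by_cases hxe : x ∈ e
    · exact hxs (hes hxe)
    · exact hs e (Finset.mem_filter.2 ⟨he, hxe⟩) hes

lemma cxF_link (E : Finset (Finset V)) (A : Finset V) (x : V) (hxA : x ∈ A) :
    linkCx (cxF E A) x = cxF (E.image (fun e => e.erase x)) (A.erase x) := by
  ext s
  constructor
  · rintro ⟨⟨hsA, _⟩, hxs, ⟨_, hins⟩⟩
    refine ⟨fun y hy => Finset.mem_erase.2 ⟨fun h => hxs (h ▸ hy), hsA hy⟩, ?_⟩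
    intro f hf hfs
    obtain ⟨e, he, rfl⟩ := Finset.mem_image.1 hf
    apply hins e he
    intro y hy
    by_cases hyx : y = x
    · exact hyx ▸ Finset.mem_insert_self x s
    · exact Finset.mem_insert_of_mem (hfs (Finset.mem_erase.2 ⟨hyx, hy⟩))
  · rintro ⟨hsA, hs⟩
    have hxs : x ∉ s := fun h => (Finset.mem_erase.1 (hsA h)).1 rfl
    have hsA' : s ⊆ A := fun y hy => (Finset.mem_erase.1 (hsA hy)).2
    have hmem : s ∈ cxF E A := by
      refine ⟨hsA', fun e he hes => ?_⟩
      have : e.erase x ⊆ s := (Finset.erase_subset x e).trans hes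
      exact hs _ (Finset.mem_image_of_mem _ he) this
    refine ⟨hmem, hxs, ⟨Finset.insert_subset hxA hsA', ?_⟩⟩
    intro e he hes
    apply hs _ (Finset.mem_image_of_mem _ he)
    intro y hy
    rcases Finset.mem_erase.1 hy with ⟨hyx, hye⟩
    rcases Finset.mem_insert.1 (hes hye) with h | h
    · exact absurd h hyx
    · exact h

lemma shed_pendant {E : Finset (Finset V)} {A : Finset V} {estar : Finset V} {x : V}
    (hestar : estar ∈ E) (hx : x ∈ estar)
    (hpriv : ∀ y ∈ estar, y ≠ x → ∀ f ∈ E, y ∈ f → f = estar)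
    (hEA : ∀ e ∈ E, e ⊆ A) :
    IsSheddingVx (cxF E A) x := by
  intro F hF
  rcases hF with ⟨⟨⟨hFA, hFE⟩, hxF⟩, hmax⟩
  -- step 1 : estar.erase x ⊆ F
  have hsub : estar.erase x ⊆ F := by
    intro y hy
    rcases Finset.mem_erase.1 hy with ⟨hyx, hye⟩
    by_contra hyF
    have hins : insert y F ∈ delCx (cxF E A) x := by
      refine ⟨⟨Finset.insert_subset (hEA estar hestar hye) hFA, ?_⟩, ?_⟩
      · intro e he hes
        by_cases hyee : y ∈ e
        · have := hpriv y hye hyx e he hyee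
          subst this
          have : x ∈ insert y F := hes hx
          rcases Finset.mem_insert.1 this with h | h
          · exact hyx h.symm
          · exact hxF h
        · exact hFE e he ((Finset.subset_insert_iff_of_notMem hyee).1 hes)
      · intro hxm
        rcases Finset.mem_insert.1 hxm with h | h
        · exact hyx h.symm
        · exact hxF h
    have := hmax _ hins (Finset.subset_insert y F)
    exact hyF (this ▸ Finset.mem_insert_self y F)
  -- step 2 : F is a facet of the whole complex
  refine ⟨⟨hFA, hFE⟩, ?_⟩
  intro t ht hFt
  by_cases hxt : x ∈ t
  · exfalso
    apply ht.2 estar hestar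
    intro y hy
    by_cases hyx : y = x
    · exact hyx ▸ hxt
    · exact hFt (hsub (Finset.mem_erase.2 ⟨hyx, hy⟩))
  · exact hmax t ⟨ht, hxt⟩ hFt

lemma engine : ∀ (n : ℕ) (E : Finset (Finset V)) (A : Finset V),
    (∑ e ∈ E, e.card) ≤ n → (∀ e ∈ E, e ⊆ A) → AcycF E →
    VertexDecomposable (cxF E A) := by
  intro n
  induction n with
  | zero =>
    intro E A hsum hEA hac
    by_cases hempty : ∅ ∈ E
    · have : cxF E A = ∅ := by
        ext s
        simp only [Set.mem_empty_iff_false, iff_false]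
        rintro ⟨-, hs⟩
        exact hs ∅ hempty (Finset.empty_subset s)
      rw [this]; exact .empty
    by_cases hE : E = ∅
    · have : cxF E A = {s | s ⊆ A} := by
        ext s; simp [cxF, hE]
      rw [this]; exact .simplex A
    · exfalso
      obtain ⟨e, he⟩ := Finset.nonempty_iff_ne_empty.2 hE
      have : 0 < e.card := Finset.card_pos.2 (Finset.nonempty_iff_ne_empty.2 (fun h => hempty (h ▸ he)))
      have hle : e.card ≤ ∑ e ∈ E, e.card := Finset.single_le_sum (fun _ _ => Nat.zero_le _) he
      omega
  | succ n ih =>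
    intro E A hsum hEA hac
    by_cases hempty : ∅ ∈ E
    · have : cxF E A = ∅ := by
        ext s
        simp only [Set.mem_empty_iff_false, iff_false]
        rintro ⟨-, hs⟩
        exact hs ∅ hempty (Finset.empty_subset s)
      rw [this]; exact .empty
    by_cases hE : E = ∅
    · have : cxF E A = {s | s ⊆ A} := by
        ext s; simp [cxF, hE]
      rw [this]; exact .simplex A
    · obtain ⟨estar, hestar, x, hx, hpriv⟩ :=
        pendant (Finset.nonempty_iff_ne_empty.2 hE) hempty hac
      apply VertexDecomposable.shed _ x (shed_pendant hestar hx hpriv hEA)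
      · rw [cxF_del]
        apply ih
        · have h1 : E.filter (fun e => x ∉ e) ⊆ E.erase estar := by
            intro e he
            rcases Finset.mem_filter.1 he with ⟨heE, hxe⟩
            exact Finset.mem_erase.2 ⟨fun h => hxe (h ▸ hx), heE⟩
          have h2 : ∑ e ∈ E.filter (fun e => x ∉ e), e.card ≤ ∑ e ∈ E.erase estar, e.card :=
            Finset.sum_le_sum_of_subset h1
          have h3 : ∑ e ∈ E.erase estar, e.card + estar.card = ∑ e ∈ E, e.card := by
            rw [Finset.sum_erase_add E _ hestar]
          have h4 : 0 < estar.card := Finset.card_pos.2 ⟨x, hx⟩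
          omega
        · intro e he
          rcases Finset.mem_filter.1 he with ⟨heE, hxe⟩
          exact Finset.subset_erase.2 ⟨hEA e heE, hxe⟩
        · exact hac.mono (Finset.filter_subset _ _)
      · rw [cxF_link E A x (hEA estar hestar hx)]
        apply ih
        · have h2 : ∑ f ∈ E.image (fun e => e.erase x), f.card
              ≤ ∑ e ∈ E, (e.erase x).card := sum_image_le' _ _ _
          have h3 : ∑ e ∈ E, (e.erase x).card < ∑ e ∈ E, e.card := by
            apply Finset.sum_lt_sum (fun i _ => Finset.card_erase_le)
            refine ⟨estar, hestar, ?_⟩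
            rw [Finset.card_erase_of_mem hx]
            have : 0 < estar.card := Finset.card_pos.2 ⟨x, hx⟩
            omega
          omega
        · intro f hf
          obtain ⟨e, he, rfl⟩ := Finset.mem_image.1 hf
          exact Finset.erase_subset_erase x (hEA e he)
        · exact hac.image_erase x

end Engine

section TreeLemmas
variable {V : Type} {G : SimpleGraph V}

lemma exists_path_dist (htree : G.IsTree) (r a : V) :
    ∃ p : G.Walk r a, p.IsPath ∧ p.length = G.dist r a := by
  obtain ⟨q, hq⟩ := htree.isConnected.exists_walk_length_eq_dist r a
  refine ⟨q.bypass, q.bypass_isPath, le_antisymm ?_ ?_⟩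
  · exact hq ▸ q.length_bypass_le
  · exact SimpleGraph.dist_le _

lemma path_length_eq_dist (htree : G.IsTree) {r a : V} (p : G.Walk r a) (hp : p.IsPath) :
    p.length = G.dist r a := by
  obtain ⟨q, hq, hql⟩ := exists_path_dist htree r a
  obtain ⟨p₀, -, hun⟩ := htree.existsUnique_path r a
  rw [hun p hp, ← hun q hq]
  exact hql

lemma isPath_concat {a b r : V} {p : G.Walk r a} (hp : p.IsPath) (h : G.Adj a b)
    (hb : b ∉ p.support) : (p.concat h).IsPath := by
  rw [← SimpleGraph.Walk.isPath_reverse_iff, SimpleGraph.Walk.reverse_concat]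
  apply SimpleGraph.Walk.IsPath.cons
  · exact (SimpleGraph.Walk.isPath_reverse_iff p).2 hp
  · rw [SimpleGraph.Walk.support_reverse]
    simpa using hb

lemma adj_dist_ne (htree : G.IsTree) (r : V) {a b : V} (hab : G.Adj a b) :
    G.dist r a ≠ G.dist r b := by
  intro he
  obtain ⟨p, hp, hpl⟩ := exists_path_dist htree r a
  by_cases hb : b ∈ p.support
  · have htake : (p.takeUntil b hb).length = G.dist r b :=
      path_length_eq_dist htree _ (hp.takeUntil hb)
    have hspec := p.take_spec hb
    have hlen : (p.takeUntil b hb).length + (p.dropUntil b hb).length = p.length := by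
      rw [← SimpleGraph.Walk.length_append, hspec]
    have : (p.dropUntil b hb).length = 0 := by omega
    have : b = a := SimpleGraph.Walk.eq_of_length_eq_zero this
    exact G.ne_of_adj hab this.symm
  · have hq : (p.concat hab).IsPath := isPath_concat hp hab hb
    have := path_length_eq_dist htree _ hq
    rw [SimpleGraph.Walk.length_concat, hpl] at this
    omega

lemma parent_unique (htree : G.IsTree) (r : V) {a b u : V}
    (hau : G.Adj a u) (hbu : G.Adj b u)
    (ha : G.dist r a + 1 = G.dist r u) (hb : G.dist r b + 1 = G.dist r u) : a = b := by
  obtain ⟨pa, hpa, hpal⟩ := exists_path_dist htree r a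
  obtain ⟨pb, hpb, hpbl⟩ := exists_path_dist htree r b
  have hua : u ∉ pa.support := by
    intro h
    have := path_length_eq_dist htree _ (hpa.takeUntil h)
    have hle := pa.length_takeUntil_le h
    omega
  have hub : u ∉ pb.support := by
    intro h
    have := path_length_eq_dist htree _ (hpb.takeUntil h)
    have hle := pb.length_takeUntil_le h
    omega
  have hqa : (pa.concat hau).IsPath := isPath_concat hpa hau hua
  have hqb : (pb.concat hbu).IsPath := isPath_concat hpb hbu hub
  obtain ⟨p₀, -, hun⟩ := htree.existsUnique_path r u
  have heq : pa.concat hau = pb.concat hbu := by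
    rw [hun _ hqa, hun _ hqb]
  obtain ⟨hv, -⟩ := SimpleGraph.Walk.concat_inj heq
  exact hv

-- degree ≤ neighbor distance bound
lemma dist_le_succ_of_adj (htree : G.IsTree) (r : V) {v u : V} (h : G.Adj v u) :
    G.dist r u ≤ G.dist r v + 1 := by
  obtain ⟨p, -, hpl⟩ := exists_path_dist htree r v
  have := SimpleGraph.dist_le (p.concat h)
  rw [SimpleGraph.Walk.length_concat, hpl] at this
  exact this

end TreeLemmas

section TreeCount
variable {V : Type} [Fintype V] (G : SimpleGraph V)

noncomputable def Nf (G : SimpleGraph V) (u : V) : Finset V :=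
  Finset.univ.filter (fun w => G.Adj u w)

lemma mem_Nf {G : SimpleGraph V} {u w : V} : w ∈ Nf G u ↔ G.Adj u w := by
  simp [Nf]

lemma treeCount (htree : G.IsTree) :
    ∀ (W : Finset V), W.Nonempty →
      (∑ v ∈ W, (Nf G v).card) + 1 ≤ (W.sup (Nf G)).card + W.card := by
  have hne : Nonempty V := htree.isConnected.nonempty
  obtain ⟨r⟩ := hne
  intro W
  induction W using Finset.strongInduction with
  | _ W ih =>
    intro hW
    obtain ⟨v, hvW, hvmax⟩ := W.exists_max_image (fun w => G.dist r w) hW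
    by_cases hW1 : W.erase v = ∅
    · have hWv : W = {v} := by
        apply Finset.eq_singleton_iff_unique_mem.2 ⟨hvW, ?_⟩
        intro y hy
        by_contra hyv
        exact (Finset.eq_empty_iff_forall_notMem.1 hW1) y (Finset.mem_erase.2 ⟨hyv, hy⟩)
      rw [hWv]
      simp
    · set W' := W.erase v with hW'
      have hW'ne : W'.Nonempty := Finset.nonempty_iff_ne_empty.2 hW1
      have hW'sub : W' ⊂ W := Finset.erase_ssubset hvW
      have hIH := ih W' hW'sub hW'ne
      set U' := W'.sup (Nf G) with hU'
      -- key claim : at most one neighbor of v lies in U'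
      have hkey : ((Nf G v) ∩ U').card ≤ 1 := by
        rw [Finset.card_le_one]
        intro y hy z hz
        rcases Finset.mem_inter.1 hy with ⟨hyN, hyU⟩
        rcases Finset.mem_inter.1 hz with ⟨hzN, hzU⟩
        have hyadj : G.Adj v y := mem_Nf.1 hyN
        have hzadj : G.Adj v z := mem_Nf.1 hzN
        have hparent : ∀ w ∈ Nf G v, w ∈ U' → G.dist r w + 1 = G.dist r v := by
          intro w hwN hwU
          obtain ⟨w', hw'W', hww'⟩ := Finset.mem_sup.1 hwU
          have hw'adj : G.Adj w' w := mem_Nf.1 hww'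
          have hvadj : G.Adj v w := mem_Nf.1 hwN
          have hw'v : w' ≠ v := (Finset.mem_erase.1 hw'W').1
          have hw'W : w' ∈ W := (Finset.mem_erase.1 hw'W').2
          have hw'le : G.dist r w' ≤ G.dist r v := hvmax w' hw'W
          have h1 : G.dist r w ≤ G.dist r v + 1 := dist_le_succ_of_adj htree r hvadj
          have h2 : G.dist r v ≤ G.dist r w + 1 := dist_le_succ_of_adj htree r hvadj.symm
          have h3 : G.dist r w ≠ G.dist r v := (adj_dist_ne htree r hvadj.symm)
          -- either w is the parent of v, or w is a child; exclude child case
          rcases Nat.lt_or_ge (G.dist r w) (G.dist r v) with hlt | hge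
          · omega
          · exfalso
            have hwv : G.dist r w = G.dist r v + 1 := by omega
            have h4 : G.dist r w' ≤ G.dist r w + 1 := dist_le_succ_of_adj htree r hw'adj.symm
            have h5 : G.dist r w ≤ G.dist r w' + 1 := dist_le_succ_of_adj htree r hw'adj
            have h6 : G.dist r w' ≠ G.dist r w := adj_dist_ne htree r hw'adj
            have hw' : G.dist r w' + 1 = G.dist r w := by omega
            have hv' : G.dist r v + 1 = G.dist r w := by omega
            exact hw'v (parent_unique htree r hw'adj hvadj hw' hv')
        have hy1 := hparent y hyN hyU
        have hz1 := hparent z hzN hzU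
        exact parent_unique htree r hyadj.symm hzadj.symm hy1 hz1
      -- assemble
      have hWins : W = insert v W' := (Finset.insert_erase hvW).symm
      have hsup : W.sup (Nf G) = (Nf G v) ∪ U' := by
        rw [hWins, Finset.sup_insert]
        rfl
      have hcardsup : (W.sup (Nf G)).card = ((Nf G v) \ U').card + U'.card := by
        rw [hsup, ← Finset.card_union_of_disjoint (Finset.sdiff_disjoint), Finset.sdiff_union_self_eq_union]
      have hNv : (Nf G v).card = ((Nf G v) \ U').card + ((Nf G v) ∩ U').card :=
        (Finset.card_sdiff_add_card_inter _ _).symm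
      have hsum : ∑ w ∈ W, (Nf G w).card = (Nf G v).card + ∑ w ∈ W', (Nf G w).card := by
        rw [hWins, Finset.sum_insert (Finset.notMem_erase v W)]
      have hcardW : W.card = W'.card + 1 := by
        rw [hWins, Finset.card_insert_of_notMem (Finset.notMem_erase v W)]
      omega
end TreeCount

section Stable
variable {V : Type} [Fintype V] {G : SimpleGraph V}

lemma mem_stableCx_iff {s : Finset V} :
    s ∈ stableCx G ↔ IsTDSet G (↑s : Set V)ᶜ := by
  constructor
  · rintro ⟨D, hD, hsD⟩
    have : (↑s : Set V)ᶜ = D := by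
      rw [hsD, Set.compl_eq_univ_diff]
      simp [Set.diff_diff_cancel_left (Set.diff_subset)]
    rwa [this]
  · intro h
    exact ⟨(↑s : Set V)ᶜ, h, by rw [← Set.compl_eq_univ_diff, compl_compl]⟩

lemma mem_stableCx_iff' {s : Finset V} :
    s ∈ stableCx G ↔ ∀ u : V, ¬ Nf G u ⊆ s := by
  rw [mem_stableCx_iff]
  unfold IsTDSet nbhd
  rw [Set.eq_univ_iff_forall]
  apply forall_congr'
  intro u
  rw [Finset.not_subset]
  constructor
  · rintro ⟨v, hv, hadj⟩
    exact ⟨v, mem_Nf.2 hadj.symm, hv⟩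
  · rintro ⟨v, hvN, hvs⟩
    exact ⟨v, hvs, (mem_Nf.1 hvN).symm⟩

lemma facet_minTD {s : Finset V} (hs : s ∈ facetsCx (stableCx G)) :
    IsMinTDSet G (↑s : Set V)ᶜ := by
  rcases hs with ⟨hsΔ, hmax⟩
  refine ⟨mem_stableCx_iff.1 hsΔ, ?_⟩
  intro S' hS' hTD
  set t : Finset V := (Set.toFinite S'ᶜ).toFinset with ht
  have hct : (↑t : Set V) = S'ᶜ := Set.Finite.coe_toFinset _
  have htΔ : t ∈ stableCx G := by
    rw [mem_stableCx_iff, hct, compl_compl]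
    exact hTD
  have hst : s ⊆ t := by
    rw [← Finset.coe_subset, hct]
    rw [Set.ssubset_iff_subset_ne] at hS'
    have := Set.compl_subset_compl.2 hS'.1
    rwa [compl_compl] at this
  have := hmax t htΔ hst
  subst this
  rw [Set.ssubset_iff_subset_ne] at hS'
  apply hS'.2
  rw [hct, compl_compl]

lemma pure_stableCx (hunm : TDUnmixed G) : PureCx (stableCx G) := by
  intro s hs t ht
  have h1 := facet_minTD hs
  have h2 := facet_minTD ht
  have := hunm _ _ h1 h2
  have hs' : ((↑s : Set V)ᶜ).ncard = Fintype.card V - s.card := by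
    rw [← Finset.coe_compl, Set.ncard_coe_finset, Finset.card_compl]
  have ht' : ((↑t : Set V)ᶜ).ncard = Fintype.card V - t.card := by
    rw [← Finset.coe_compl, Set.ncard_coe_finset, Finset.card_compl]
  have hsle := Finset.card_le_univ s
  have htle := Finset.card_le_univ t
  rw [Fintype.card] at *
  omega

lemma stableCx_eq_cxF : stableCx G = cxF (Finset.univ.image (Nf G)) Finset.univ := by
  ext s
  rw [mem_stableCx_iff']
  constructor
  · intro h
    refine ⟨Finset.subset_univ s, ?_⟩
    intro e he
    obtain ⟨u, -, rfl⟩ := Finset.mem_image.1 he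
    exact h u
  · rintro ⟨-, h⟩ u
    exact h _ (Finset.mem_image_of_mem _ (Finset.mem_univ u))



lemma acyc_tree (htree : G.IsTree) : AcycF (Finset.univ.image (Nf G)) := by
  intro F hF hne
  obtain ⟨W, -, himg, hcard⟩ := exists_lift hF
  have hWne : W.Nonempty := by
    rw [← Finset.card_pos, hcard, Finset.card_pos]; exact hne
  have hsum : ∑ f ∈ F, f.card ≤ ∑ v ∈ W, (Nf G v).card := by
    rw [← himg]; exact sum_image_le' _ _ _
  have hsup : F.sup id = W.sup (Nf G) := by
    rw [← himg, Finset.sup_image]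
    rfl
  have := treeCount G htree W hWne
  rw [hsup, ← hcard]
  omega

lemma vd_stableCx (htree : G.IsTree) : VertexDecomposable (stableCx G) := by
  rw [stableCx_eq_cxF]
  exact engine (∑ e ∈ Finset.univ.image (Nf G), e.card) _ _ le_rfl
    (fun e _ => Finset.subset_univ e) (acyc_tree htree)

end Stable

end TDAux

/-- **Theorem**: the stable complex of a finite TD-unmixed tree is a pure vertex
decomposable simplicial complex. -/
theorem stableCx_pure_vertexDecomposable {V : Type} [Fintype V] (G : SimpleGraph V)
    (htree : G.IsTree) (hunm : TDUnmixed G) :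
    PureCx (stableCx G) ∧ VertexDecomposable (stableCx G) := by
  exact ⟨TDAux.pure_stableCx hunm, TDAux.vd_stableCx htree⟩
end

section
/- Let k be a field and let m = x_{i_1}⋯x_{i_t} be a squarefree monomial in k[x_1,…,x_n] that is a product of a nonempty set of distinct variables. Then the principal ideal ⟨m⟩ is geometrically vertex decomposable. -/
open scoped Classical

section AuxLemmas

variable (k : Type) [Field k] {σ : Type}

lemma prime_X_mv (i : σ) : Prime (MvPolynomial.X i : MvPolynomial σ k) := by
  let e := (MvPolynomial.renameEquiv k (Equiv.optionSubtypeNe i).symm).trans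
    (MvPolynomial.optionEquivLeft k {b : σ // b ≠ i})
  have he : e (MvPolynomial.X i) = Polynomial.X := by
    simp [e, MvPolynomial.optionEquivLeft_X_none, Equiv.optionSubtypeNe_symm_self]
  rw [← MulEquiv.prime_iff e.toRingEquiv.toMulEquiv]
  show Prime (e (MvPolynomial.X i))
  rw [he]
  exact Polynomial.prime_X

lemma sqMono_ne_zero (s : Finset σ) : sqMono k s ≠ 0 :=
  Finset.prod_ne_zero_iff.mpr fun i _ => MvPolynomial.X_ne_zero i

lemma sqSpan_empty : sqSpan k (∅ : Set (Finset σ)) = ⊥ := by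
  have : {m : MvPolynomial σ k | ∃ s ∈ (∅ : Set (Finset σ)), m = sqMono k s} = ∅ := by
    simp
  rw [sqSpan, this, Ideal.span_empty]

lemma sqSpan_singleton (s : Finset σ) :
    sqSpan k ({s} : Set (Finset σ)) = Ideal.span {sqMono k s} := by
  have : {m : MvPolynomial σ k | ∃ t ∈ ({s} : Set (Finset σ)), m = sqMono k t}
      = {sqMono k s} := by
    ext m; simp [eq_comm]
  rw [sqSpan, this]

lemma span_X_prime (i : σ) :
    (Ideal.span {(MvPolynomial.X i : MvPolynomial σ k)}).IsPrime :=
  (Ideal.span_singleton_prime (MvPolynomial.X_ne_zero i)).mpr (prime_X_mv k i)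

/-- Every minimal prime of `⟨sqMono s⟩` is `⟨X i⟩` for some `i ∈ s`. -/
lemma minimalPrime_sqMono {s : Finset σ} {P : Ideal (MvPolynomial σ k)}
    (hP : P ∈ (Ideal.span {sqMono k s}).minimalPrimes) :
    ∃ i ∈ s, P = Ideal.span {(MvPolynomial.X i : MvPolynomial σ k)} := by
  have hPprime : P.IsPrime := hP.1.1
  have hmem : sqMono k s ∈ P := hP.1.2 (Ideal.subset_span rfl)
  rw [sqMono] at hmem
  have : ∃ i ∈ s, (MvPolynomial.X i : MvPolynomial σ k) ∈ P :=
    (Ideal.IsPrime.prod_mem_iff (hp := hPprime)).mp hmem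
  obtain ⟨i, hi, hXi⟩ := this
  refine ⟨i, hi, ?_⟩
  have hle : Ideal.span {(MvPolynomial.X i : MvPolynomial σ k)} ≤ P :=
    (Ideal.span_singleton_le_iff_mem P).mpr hXi
  have hIle : Ideal.span {sqMono k s} ≤ Ideal.span {(MvPolynomial.X i : MvPolynomial σ k)} := by
    rw [Ideal.span_singleton_le_span_singleton]
    exact Finset.dvd_prod_of_mem _ hi
  exact le_antisymm (hP.2 ⟨span_X_prime k i, hIle⟩ hle) hle

/-- Any two ideals `⟨X i⟩`, `⟨X j⟩` have the same height. -/
lemma primeHt_span_X (i j : σ) :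
    primeHt (Ideal.span {(MvPolynomial.X i : MvPolynomial σ k)}) (span_X_prime k i)
      = primeHt (Ideal.span {(MvPolynomial.X j : MvPolynomial σ k)}) (span_X_prime k j) := by
  classical
  let φ : MvPolynomial σ k ≃+* MvPolynomial σ k :=
    (MvPolynomial.renameEquiv k (Equiv.swap i j)).toRingEquiv
  have hc : ∀ (ψ : MvPolynomial σ k ≃+* MvPolynomial σ k) (P : PrimeSpectrum (MvPolynomial σ k)),
      (P.asIdeal.comap (ψ : MvPolynomial σ k →+* MvPolynomial σ k)).IsPrime := fun ψ P => by
    have := P.isPrime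
    exact Ideal.comap_isPrime _ _
  let f : PrimeSpectrum (MvPolynomial σ k) ≃o PrimeSpectrum (MvPolynomial σ k) :=
    { toFun := fun P => ⟨P.asIdeal.comap (φ : MvPolynomial σ k →+* MvPolynomial σ k), hc φ P⟩
      invFun := fun P => ⟨P.asIdeal.comap (φ.symm : MvPolynomial σ k →+* MvPolynomial σ k),
        hc φ.symm P⟩
      left_inv := fun P => by
        ext x
        rw [Ideal.mem_comap, Ideal.mem_comap]
        exact ⟨fun h => by simpa using h, fun h => by simpa using h⟩
      right_inv := fun P => by
        ext x
        rw [Ideal.mem_comap, Ideal.mem_comap]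
        exact ⟨fun h => by simpa using h, fun h => by simpa using h⟩
      map_rel_iff' := by
        intro P Q
        constructor
        · intro h x hx
          have hx' : φ.symm x ∈ P.asIdeal.comap (φ : MvPolynomial σ k →+* MvPolynomial σ k) := by
            rw [Ideal.mem_comap]
            simpa using hx
          have h2 : φ.symm x ∈ Q.asIdeal.comap (φ : MvPolynomial σ k →+* MvPolynomial σ k) :=
            h hx'
          rw [Ideal.mem_comap] at h2
          simpa using h2
        · intro h
          exact Ideal.comap_mono h }
  have key : f ⟨Ideal.span {(MvPolynomial.X j : MvPolynomial σ k)}, span_X_prime k j⟩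
      = ⟨Ideal.span {(MvPolynomial.X i : MvPolynomial σ k)}, span_X_prime k i⟩ := by
    ext1
    show (Ideal.span {(MvPolynomial.X j : MvPolynomial σ k)}).comap
      (φ : MvPolynomial σ k →+* MvPolynomial σ k)
      = Ideal.span {(MvPolynomial.X i : MvPolynomial σ k)}
    have hXij : φ (MvPolynomial.X i) = MvPolynomial.X j := by
      simp [φ, AlgEquiv.toRingEquiv_eq_coe, Equiv.swap_apply_left]
    ext x
    simp only [Ideal.mem_comap, Ideal.mem_span_singleton]
    constructor
    · intro h
      have h2 := map_dvd φ.symm h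
      rw [← hXij, RingEquiv.symm_apply_apply] at h2
      simpa using h2
    · intro h
      have h2 := map_dvd φ h
      rwa [hXij] at h2
  have := Order.height_orderIso f
    ⟨Ideal.span {(MvPolynomial.X j : MvPolynomial σ k)}, span_X_prime k j⟩
  rw [key] at this
  exact this

lemma unmixed_top : UnmixedIdeal (⊤ : Ideal (MvPolynomial σ k)) := by
  intro P Q hP hQ
  exact absurd (top_le_iff.mp hP.1.2) hP.1.1.ne_top

lemma unmixed_bot : UnmixedIdeal (⊥ : Ideal (MvPolynomial σ k)) := by
  intro P Q hP hQ
  have hP' : P = ⊥ := le_bot_iff.mp (hP.2 ⟨Ideal.bot_prime, le_rfl⟩ bot_le)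
  have hQ' : Q = ⊥ := le_bot_iff.mp (hQ.2 ⟨Ideal.bot_prime, le_rfl⟩ bot_le)
  subst hP'; subst hQ'
  rfl

lemma unmixed_sqMono (s : Finset σ) : UnmixedIdeal (Ideal.span {sqMono k s}) := by
  intro P Q hP hQ
  obtain ⟨i, _, rfl⟩ := minimalPrime_sqMono k hP
  obtain ⟨j, _, rfl⟩ := minimalPrime_sqMono k hQ
  exact primeHt_span_X k i j

lemma isGVD_bot (τ : Type) : IsGVD k τ (⊥ : Ideal (MvPolynomial τ k)) := by
  refine IsGVD.base τ ⊥ (unmixed_bot k) (Or.inr ⟨∅, ?_⟩)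
  simp

lemma span_inf_span_X {s : Finset σ} {y : σ} (hy : y ∈ s) :
    Ideal.span {sqMono k s}
      = Ideal.span {sqMono k (s.erase y)} ⊓ Ideal.span {(MvPolynomial.X y : MvPolynomial σ k)} := by
  have hfac : sqMono k (s.erase y) * MvPolynomial.X y = sqMono k s := by
    rw [sqMono, sqMono]
    exact Finset.prod_erase_mul s _ hy
  have hndvd : ¬ (MvPolynomial.X y : MvPolynomial σ k) ∣ sqMono k (s.erase y) := by
    rw [sqMono, Prime.dvd_finset_prod_iff (prime_X_mv k y)]
    rintro ⟨a, ha, hdvd⟩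
    rw [MvPolynomial.X_dvd_X] at hdvd
    exact (Finset.mem_erase.mp ha).1 hdvd.symm
  apply le_antisymm
  · refine le_inf ?_ ?_ <;> rw [Ideal.span_singleton_le_span_singleton, ← hfac]
    · exact Dvd.intro _ rfl
    · exact Dvd.intro_left _ rfl
  · intro p hp
    obtain ⟨hp1, hp2⟩ := Submodule.mem_inf.mp hp
    rw [Ideal.mem_span_singleton] at hp1 hp2 ⊢
    obtain ⟨c, rfl⟩ := hp1
    have : (MvPolynomial.X y : MvPolynomial σ k) ∣ c :=
      ((prime_X_mv k y).dvd_mul.mp hp2).resolve_left hndvd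
    obtain ⟨d, rfl⟩ := this
    rw [← hfac]
    ring_nf
    exact Dvd.intro _ rfl

lemma isGVD_sqMono_aux :
    ∀ (N : ℕ) (σ : Type) (s : Finset σ), s.card ≤ N →
      IsGVD k σ (Ideal.span {sqMono k s}) := by
  intro N
  induction N with
  | zero =>
    intro σ s hcard
    have hs : s = ∅ := Finset.card_eq_zero.mp (Nat.le_zero.mp hcard)
    subst hs
    have h1 : (sqMono k (∅ : Finset σ)) = 1 := Finset.prod_empty
    rw [h1, Ideal.span_singleton_one]
    exact IsGVD.base σ ⊤ (unmixed_top k) (Or.inl rfl)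
  | succ N ih =>
    intro σ s hcard
    rcases s.eq_empty_or_nonempty with rfl | ⟨y, hy⟩
    · have h1 : (sqMono k (∅ : Finset σ)) = 1 := Finset.prod_empty
      rw [h1, Ideal.span_singleton_one]
      exact IsGVD.base σ ⊤ (unmixed_top k) (Or.inl rfl)
    · have hNFam : NFam y ({s} : Set (Finset σ)) = ∅ := by
        ext t
        simp only [NFam, Set.mem_setOf_eq, Set.mem_singleton_iff, Set.mem_empty_iff_false,
          iff_false, not_and]
        rintro rfl
        simpa using hy
      have hCFam : CFam y ({s} : Set (Finset σ)) = {s.erase y} := by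
        rw [CFam, Set.image_singleton]
      refine IsGVD.step σ _ (unmixed_sqMono k s) {s} (sqSpan_singleton k s).symm y ?_ ?_ ?_
      · rw [hNFam, hCFam, sqSpan_empty, sqSpan_singleton, bot_sup_eq]
        exact span_inf_span_X k hy
      · rw [hCFam, Set.image_singleton, sqSpan_singleton]
        apply ih
        have h1 : (dropVar y (s.erase y)).card ≤ (s.erase y).card := by
          rw [dropVar, Finset.card_subtype]
          exact Finset.card_filter_le _ _
        have h2 : (s.erase y).card ≤ N := by
          have := Finset.card_erase_lt_of_mem hy
          omega
        omega
      · rw [hNFam, Set.image_empty, sqSpan_empty]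
        exact isGVD_bot k _

end AuxLemmas

/-- **Lemma**: the principal ideal generated by a squarefree monomial
`m = x_{i₁} ⋯ x_{iₜ}` (a product of a nonempty set of distinct variables) in
`k[x_1, …, x_n]` is geometrically vertex decomposable. -/
theorem principal_sqMono_isGVD (k : Type) [Field k] (n : ℕ) (s : Finset (Fin n))
    (hs : s.Nonempty) :
    IsGVD k (Fin n) (Ideal.span {sqMono k s}) := by
  exact isGVD_sqMono_aux k s.card (Fin n) s le_rfl
end

section
/- Let T be a finite TD-unmixed balanced tree of height 3, and let u be a vertex of height 2 with deg_T(u)=2. Set I = N_odd(T) ⊆ k[x_v : v∈V(T)], taken with its generating set {X_{N(v)} : v ∈ V_odd(T)}, let T' = T∖{u} and T'' = T∖N[u] (induced subgraphs). Then C_{u,I} = N_odd(T',T) and N_{u,I} = N_odd(T'',T) = N_odd(T''). -/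
open scoped Classical

section InducedDefs

variable {V : Type} [Fintype V]

/-- The induced odd-open neighborhood ideal `N_odd(T', T)` of the subgraph of `G` induced
on `S`:  generated by the monomials `X_{N_{T'}(v)}` for `v ∈ V(T') ∩ V_odd(T)`, the
neighborhood being taken in the induced subgraph and oddness of height in `G`. -/
noncomputable def inducedOddONI (k : Type) [Field k] (G : SimpleGraph V) (S : Set V) :
    Ideal (MvPolynomial V k) :=
  sqSpan k {s | ∃ v : S, Odd (heightVx G (v : V)) ∧
    s = Finset.image Subtype.val (nbrFinset (G.induce S) v)}

/-- The odd-open neighborhood ideal `N_odd(T')` of the subgraph of `G` induced on `S`,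
viewed in the polynomial ring on all of `V`: heights are now computed in the induced
subgraph itself. -/
noncomputable def oddONIon (k : Type) [Field k] (G : SimpleGraph V) (S : Set V) :
    Ideal (MvPolynomial V k) :=
  sqSpan k {s | ∃ v : S, Odd (heightVx (G.induce S) v) ∧
    s = Finset.image Subtype.val (nbrFinset (G.induce S) v)}

end InducedDefs


section AuxLemmas

open SimpleGraph

variable {V : Type} {G : SimpleGraph V}

lemma aux_leaf_height {l : V} (hl : IsLeafVx G l) : heightVx G l = 0 :=
  Nat.le_zero.mp (Nat.sInf_le ⟨l, hl, SimpleGraph.Reachable.refl l, SimpleGraph.dist_self⟩)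

lemma aux_height_mem (hleaf : ∀ v : V, ∃ l, IsLeafVx G l ∧ G.Reachable v l) (v : V) :
    ∃ l, IsLeafVx G l ∧ G.Reachable v l ∧ G.dist v l = heightVx G v := by
  obtain ⟨l, hl, hr⟩ := hleaf v
  have hne : Set.Nonempty {n | ∃ l, IsLeafVx G l ∧ G.Reachable v l ∧ G.dist v l = n} :=
    ⟨G.dist v l, l, hl, hr, rfl⟩
  exact Nat.sInf_mem hne

lemma aux_height_le_adj (hleaf : ∀ v : V, ∃ l, IsLeafVx G l ∧ G.Reachable v l)
    {v w : V} (hadj : G.Adj v w) : heightVx G v ≤ heightVx G w + 1 := by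
  obtain ⟨l, hl, hr, hd⟩ := aux_height_mem hleaf w
  obtain ⟨p, hp⟩ := hr.exists_walk_length_eq_dist
  have h1 : G.dist v l ≤ heightVx G w + 1 := by
    have := SimpleGraph.dist_le (SimpleGraph.Walk.cons hadj p)
    simpa [hp, hd] using this
  exact le_trans (Nat.sInf_le ⟨l, hl, hadj.reachable.trans hr, rfl⟩) h1

lemma aux_odd_height_adj (hleaf : ∀ v : V, ∃ l, IsLeafVx G l ∧ G.Reachable v l)
    (hbal : IsBalanced G) {v w : V} (hadj : G.Adj v w) :
    (heightVx G v + heightVx G w) % 2 = 1 := by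
  have h1 := aux_height_le_adj hleaf hadj
  have h2 := aux_height_le_adj hleaf hadj.symm
  have h3 := hbal v w hadj
  omega

lemma aux_walk_parity (hleaf : ∀ v : V, ∃ l, IsLeafVx G l ∧ G.Reachable v l)
    (hbal : IsBalanced G) {v w : V} (p : G.Walk v w) :
    (p.length + heightVx G v + heightVx G w) % 2 = 0 := by
  induction p with
  | nil => simp only [SimpleGraph.Walk.length_nil]; omega
  | cons hadj q ih =>
    have := aux_odd_height_adj hleaf hbal hadj
    simp only [SimpleGraph.Walk.length_cons] at *
    omega

lemma aux_exists_leaf_reachable {W : Type} [Fintype W] {H : SimpleGraph W}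
    (hac : H.IsAcyclic) {v x : W} (hadj : H.Adj v x) :
    ∃ l, IsLeafVx H l ∧ H.Reachable v l := by
  classical
  set D : Set ℕ := {n | ∃ w, H.Reachable v w ∧ H.dist v w = n} with hD
  have hDne : D.Nonempty := ⟨0, v, SimpleGraph.Reachable.refl v, SimpleGraph.dist_self⟩
  have hDbd : BddAbove D := by
    refine ⟨Fintype.card W, fun n hn => ?_⟩
    obtain ⟨w, hr, hd⟩ := hn
    obtain ⟨p, hp⟩ := hr.exists_walk_length_eq_dist
    have h1 : H.dist v w ≤ p.bypass.length := SimpleGraph.dist_le p.bypass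
    have h2 : p.bypass.length < Fintype.card W := p.bypass_isPath.length_lt
    omega
  set d := sSup D with hdd
  have hmem : d ∈ D := Nat.sSup_mem hDne hDbd
  obtain ⟨w, hrw, hdw⟩ := hmem
  have hd1 : 1 ≤ d :=
    le_csSup hDbd ⟨x, hadj.reachable, (SimpleGraph.dist_eq_one_iff_adj).mpr hadj⟩
  have hvw : v ≠ w := by rintro rfl; simp [SimpleGraph.dist_self] at hdw; omega
  obtain ⟨y, hy⟩ : ∃ y, H.Adj w y := by
    obtain ⟨pw⟩ := hrw.symm
    cases pw with
    | nil => exact absurd rfl hvw.symm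
    | cons h q => exact ⟨_, h⟩
  have key : ∀ z, H.Adj w z → ∃ q : H.Walk v z, q.IsPath ∧ w ∉ q.support := by
    intro z hz
    have hrz : H.Reachable v z := hrw.trans hz.reachable
    obtain ⟨p0, hp0⟩ := hrz.exists_walk_length_eq_dist
    have hbp : p0.bypass.length = H.dist v z :=
      le_antisymm (hp0 ▸ SimpleGraph.Walk.length_bypass_le p0) (SimpleGraph.dist_le p0.bypass)
    have hez : H.dist v z ≤ d := le_csSup hDbd ⟨z, hrz, rfl⟩
    refine ⟨p0.bypass, p0.bypass_isPath, fun hw => ?_⟩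
    have ht := SimpleGraph.Walk.take_spec p0.bypass hw
    have hlen : (p0.bypass.takeUntil w hw).length + (p0.bypass.dropUntil w hw).length
        = p0.bypass.length := by
      rw [← SimpleGraph.Walk.length_append, ht]
    have h3 : d ≤ (p0.bypass.takeUntil w hw).length := hdw ▸ SimpleGraph.dist_le _
    have h4 : H.dist w z ≤ (p0.bypass.dropUntil w hw).length := SimpleGraph.dist_le _
    have h5 : (p0.bypass.dropUntil w hw).length = 0 := by omega
    exact hz.ne (SimpleGraph.Walk.eq_of_length_eq_zero h5)
  have uniq : ∀ z₁ z₂, H.Adj w z₁ → H.Adj w z₂ → z₁ = z₂ := by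
    intro z₁ z₂ h1 h2
    obtain ⟨q₁, hq₁, hw₁⟩ := key z₁ h1
    obtain ⟨q₂, hq₂, hw₂⟩ := key z₂ h2
    have hP₁ : (q₁.concat h1.symm).IsPath := by
      rw [SimpleGraph.Walk.isPath_def, SimpleGraph.Walk.support_concat]
      simpa [List.concat_eq_append, List.nodup_append] using
        ⟨hq₁.support_nodup, fun a ha hEq => hw₁ (hEq ▸ ha)⟩
    have hP₂ : (q₂.concat h2.symm).IsPath := by
      rw [SimpleGraph.Walk.isPath_def, SimpleGraph.Walk.support_concat]
      simpa [List.concat_eq_append, List.nodup_append] using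
        ⟨hq₂.support_nodup, fun a ha hEq => hw₂ (hEq ▸ ha)⟩
    have := hac.path_unique ⟨q₁.concat h1.symm, hP₁⟩ ⟨q₂.concat h2.symm, hP₂⟩
    have heq : q₁.concat h1.symm = q₂.concat h2.symm := congrArg Subtype.val this
    obtain ⟨hv, -⟩ := SimpleGraph.Walk.concat_inj heq
    exact hv
  refine ⟨w, ?_, hrw⟩
  have hset : H.neighborSet w = {y} := by
    ext z
    simp only [SimpleGraph.mem_neighborSet, Set.mem_singleton_iff]
    exact ⟨fun h => uniq z y h hy, fun h => h ▸ hy⟩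
  rw [IsLeafVx, hset, Set.ncard_singleton]

end AuxLemmas

/-- **Lemma** (Lemma 4.3): let `T` be a finite TD-unmixed balanced tree of height 3 and
`u` a vertex of height 2 and degree 2, and let `I = N_odd(T)` with its generating set
`{X_{N(v)} : v ∈ V_odd(T)}`.  Then `C_{u,I} = N_odd(T∖{u}, T)` and
`N_{u,I} = N_odd(T∖N[u], T) = N_odd(T∖N[u])`. -/
theorem C_and_N_of_oddONI (k : Type) [Field k] {V : Type} [Fintype V] (G : SimpleGraph V)
    (htree : G.IsTree) (hbal : IsBalanced G) (hunm : TDUnmixed G)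
    (hht : heightGr G = 3) (u : V) (hu2 : heightVx G u = 2)
    (hdeg : (G.neighborSet u).ncard = 2) :
    sqSpan k (CFam u {s | ∃ v : V, Odd (heightVx G v) ∧ s = nbrFinset G v})
        = inducedOddONI k G {x | x ≠ u} ∧
    sqSpan k (NFam u {s | ∃ v : V, Odd (heightVx G v) ∧ s = nbrFinset G v})
        = inducedOddONI k G ((G.neighborSet u ∪ {u})ᶜ) ∧
    inducedOddONI k G ((G.neighborSet u ∪ {u})ᶜ)
        = oddONIon k G ((G.neighborSet u ∪ {u})ᶜ) := by
  classical
  have hconn := htree.isConnected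
  have hac := htree.IsAcyclic
  -- a leaf exists and is reachable from everywhere
  have hex : ∃ l, IsLeafVx G l := by
    by_contra h
    push_neg at h
    have h0 : ∀ v, heightVx G v = 0 := by
      intro v
      have hemp : {n | ∃ l, IsLeafVx G l ∧ G.Reachable v l ∧ G.dist v l = n} = ∅ := by
        ext n
        simp only [Set.mem_setOf_eq, Set.mem_empty_iff_false, iff_false]
        rintro ⟨l, hl, -⟩
        exact h l hl
      rw [heightVx, hemp, Nat.sInf_empty]
    have h00 : heightGr G = 0 := by
      rw [heightGr]
      have hsub : Set.range (heightVx G) ⊆ {0} := by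
        rintro n ⟨v, rfl⟩
        simp [h0]
      rcases Set.subset_singleton_iff_eq.mp hsub with h' | h' <;> simp [h']
    rw [h00] at hht
    exact absurd hht (by omega)
  have hleaf : ∀ v : V, ∃ l, IsLeafVx G l ∧ G.Reachable v l := by
    intro v
    obtain ⟨l, hl⟩ := hex
    exact ⟨l, hl, hconn v l⟩
  have hpar : ∀ {v w : V}, G.Adj v w → (heightVx G v + heightVx G w) % 2 = 1 :=
    fun h => aux_odd_height_adj hleaf hbal h
  have hne_u : ∀ v : V, Odd (heightVx G v) → v ≠ u := by
    rintro v hv rfl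
    rw [hu2, Nat.odd_iff] at hv
    omega
  have hnbru : ∀ {w : V}, G.Adj u w → heightVx G w % 2 = 1 := by
    intro w h
    have := hpar h
    rw [hu2] at this
    omega
  have hmemnbr : ∀ v x : V, x ∈ nbrFinset G v ↔ G.Adj v x := by
    intro v x
    simp [nbrFinset, Set.Finite.mem_toFinset]
  have himg : ∀ (S : Set V) (v : V) (hv : v ∈ S) (x : V),
      x ∈ Finset.image Subtype.val (nbrFinset (G.induce S) ⟨v, hv⟩) ↔ G.Adj v x ∧ x ∈ S := by
    intro S v hv x
    simp only [nbrFinset, Finset.mem_image, Set.Finite.mem_toFinset, SimpleGraph.mem_neighborSet,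
      SimpleGraph.comap_adj, Function.Embedding.coe_subtype]
    constructor
    · rintro ⟨⟨y, hy⟩, hadj, rfl⟩
      exact ⟨hadj, hy⟩
    · rintro ⟨hadj, hx⟩
      exact ⟨⟨x, hx⟩, hadj, rfl⟩
  have hS2 : ∀ x : V, x ∈ (G.neighborSet u ∪ {u})ᶜ ↔ ¬G.Adj u x ∧ x ≠ u := by
    intro x
    simp only [Set.mem_compl_iff, Set.mem_union, Set.mem_singleton_iff,
      SimpleGraph.mem_neighborSet]
    tauto
  have hsub : ∀ v : V, Odd (heightVx G v) → ¬ G.Adj v u → ∀ x, G.Adj v x →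
      (¬ G.Adj u x ∧ x ≠ u) := by
    intro v hv hvu x hvx
    constructor
    · intro hux
      have h1 := hnbru hux
      have h2 := hpar hvx
      rw [Nat.odd_iff] at hv
      omega
    · rintro rfl
      exact hvu hvx
  refine ⟨?_, ?_, ?_⟩
  · -- C-part
    rw [inducedOddONI]
    congr 1
    ext s
    simp only [CFam, Set.mem_image, Set.mem_setOf_eq]
    constructor
    · rintro ⟨t, ⟨v, hv, rfl⟩, rfl⟩
      refine ⟨⟨v, hne_u v hv⟩, hv, ?_⟩
      ext x
      rw [Finset.mem_erase, hmemnbr]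
      constructor
      · rintro ⟨h1, h2⟩
        exact (himg {x | x ≠ u} v (hne_u v hv) x).mpr ⟨h2, h1⟩
      · intro hx
        have h' := (himg {x | x ≠ u} v (hne_u v hv) x).mp hx
        exact ⟨h'.2, h'.1⟩
    · rintro ⟨⟨v, hvne⟩, hv, rfl⟩
      refine ⟨nbrFinset G v, ⟨v, hv, rfl⟩, ?_⟩
      ext x
      rw [Finset.mem_erase, hmemnbr]
      constructor
      · rintro ⟨h1, h2⟩
        exact (himg {x | x ≠ u} v hvne x).mpr ⟨h2, h1⟩
      · intro hx
        have h' := (himg {x | x ≠ u} v hvne x).mp hx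
        exact ⟨h'.2, h'.1⟩
  · -- N-part
    rw [inducedOddONI]
    congr 1
    ext s
    simp only [NFam, Set.mem_setOf_eq, Set.mem_sep_iff]
    constructor
    · rintro ⟨⟨v, hv, rfl⟩, hus⟩
      have hvu : ¬ G.Adj v u := fun h => hus ((hmemnbr v u).mpr h)
      have hvS : v ∈ (G.neighborSet u ∪ {u})ᶜ := (hS2 v).mpr ⟨fun h => hvu h.symm, hne_u v hv⟩
      refine ⟨⟨v, hvS⟩, hv, ?_⟩
      ext x
      rw [hmemnbr]
      constructor
      · intro h
        exact (himg _ v hvS x).mpr ⟨h, (hS2 x).mpr (hsub v hv hvu x h)⟩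
      · intro hx
        exact ((himg _ v hvS x).mp hx).1
    · rintro ⟨⟨v, hvS⟩, hv, rfl⟩
      have hvu : ¬ G.Adj v u := fun h => ((hS2 v).mp hvS).1 h.symm
      have hseq : Finset.image Subtype.val
          (nbrFinset (G.induce ((G.neighborSet u ∪ {u})ᶜ)) ⟨v, hvS⟩) = nbrFinset G v := by
        ext x
        rw [hmemnbr]
        constructor
        · intro hx
          exact ((himg _ v hvS x).mp hx).1
        · intro h
          exact (himg _ v hvS x).mpr ⟨h, (hS2 x).mpr (hsub v hv hvu x h)⟩
      exact ⟨⟨v, hv, hseq⟩, fun hus => ((hS2 u).mp (((himg _ v hvS u).mp hus).2)).2 rfl⟩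
  · -- heights agree on T''
    rw [inducedOddONI, oddONIon]
    congr 1
    have hacH : (G.induce ((G.neighborSet u ∪ {u})ᶜ)).IsAcyclic := by
      intro v c hc
      exact hac _ (SimpleGraph.Walk.IsCycle.map
        (f := (SimpleGraph.Embedding.induce ((G.neighborSet u ∪ {u})ᶜ)).toHom)
        Subtype.val_injective hc)
    have hleafH : ∀ l : ((G.neighborSet u ∪ {u})ᶜ : Set V),
        IsLeafVx (G.induce ((G.neighborSet u ∪ {u})ᶜ)) l → heightVx G ↑l % 2 = 0 := by
      intro l hl
      by_cases hall : ∀ z, G.Adj ↑l z → z ∈ (G.neighborSet u ∪ {u})ᶜ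
      · have himgS : Subtype.val ''
            ((G.induce ((G.neighborSet u ∪ {u})ᶜ)).neighborSet l) = G.neighborSet ↑l := by
          ext z
          simp only [Set.mem_image, SimpleGraph.mem_neighborSet, SimpleGraph.comap_adj,
            Function.Embedding.coe_subtype]
          constructor
          · rintro ⟨⟨z, hz⟩, hadj, rfl⟩
            exact hadj
          · intro h
            exact ⟨⟨z, hall z h⟩, h, rfl⟩
        have hlG : IsLeafVx G ↑l := by
          rw [IsLeafVx, ← himgS, Set.ncard_image_of_injective _ Subtype.val_injective]
          exact hl
        rw [aux_leaf_height hlG]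
      · push_neg at hall
        obtain ⟨z, hz, hznot⟩ := hall
        have hz' : z = u ∨ G.Adj u z := by
          have := Set.notMem_compl_iff.mp hznot
          simpa [Set.mem_union, SimpleGraph.mem_neighborSet] using this
        rcases hz' with rfl | h
        · exact absurd hz.symm ((hS2 ↑l).mp l.2).1
        · have h1 := hnbru h
          have h2 := hpar hz
          omega
    have hparv : ∀ v : ((G.neighborSet u ∪ {u})ᶜ : Set V),
        (heightVx (G.induce ((G.neighborSet u ∪ {u})ᶜ)) v + heightVx G ↑v) % 2 = 0 := by
      intro v
      by_cases hne : Set.Nonempty {n | ∃ l, IsLeafVx (G.induce ((G.neighborSet u ∪ {u})ᶜ)) l ∧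
          (G.induce ((G.neighborSet u ∪ {u})ᶜ)).Reachable v l ∧
          (G.induce ((G.neighborSet u ∪ {u})ᶜ)).dist v l = n}
      · obtain ⟨l, hlH, hrH, hdH⟩ := Nat.sInf_mem hne
        obtain ⟨p, hp⟩ := hrH.exists_walk_length_eq_dist
        have hpar2 := aux_walk_parity hleaf hbal
          (p.map (SimpleGraph.Embedding.induce ((G.neighborSet u ∪ {u})ᶜ)).toHom)
        rw [SimpleGraph.Walk.length_map] at hpar2
        have hle := hleafH l hlH
        have hpar2' : (p.length + heightVx G ↑v + heightVx G ↑l) % 2 = 0 := hpar2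
        have hhv : heightVx (G.induce ((G.neighborSet u ∪ {u})ᶜ)) v = p.length := by
          rw [hp, hdH]; rfl
        omega
      · have h0 : heightVx (G.induce ((G.neighborSet u ∪ {u})ᶜ)) v = 0 := by
          rw [heightVx, Set.not_nonempty_iff_eq_empty.mp hne, Nat.sInf_empty]
        rw [h0]
        have heven : heightVx G (↑v : V) % 2 = 0 := by
          by_contra hodd
          have hoddv : heightVx G (↑v : V) % 2 = 1 := by omega
          obtain ⟨l0, hl0, hr0, hd0⟩ := aux_height_mem hleaf (↑v : V)
          have hvne : (↑v : V) ≠ l0 := by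
            rintro heq
            rw [heq, SimpleGraph.dist_self] at hd0
            rw [heq] at hoddv
            omega
          obtain ⟨x, hx⟩ : ∃ x, G.Adj ↑v x := by
            obtain ⟨p0⟩ := hr0
            cases p0 with
            | nil => exact absurd rfl hvne
            | cons h q => exact ⟨_, h⟩
          have hxS : x ∈ (G.neighborSet u ∪ {u})ᶜ := (hS2 x).mpr
            (hsub ↑v (Nat.odd_iff.mpr hoddv) (fun h => ((hS2 ↑v).mp v.2).1 h.symm) x hx)
          have hadjH : (G.induce ((G.neighborSet u ∪ {u})ᶜ)).Adj v ⟨x, hxS⟩ := by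
            simpa [SimpleGraph.comap_adj, Function.Embedding.coe_subtype] using hx
          obtain ⟨l, hl, hr⟩ := aux_exists_leaf_reachable hacH hadjH
          exact hne ⟨(G.induce ((G.neighborSet u ∪ {u})ᶜ)).dist v l, l, hl, hr, rfl⟩
        omega
    ext s
    simp only [Set.mem_setOf_eq]
    constructor
    · rintro ⟨v, hv, rfl⟩
      refine ⟨v, ?_, rfl⟩
      have := hparv v
      rw [Nat.odd_iff] at hv ⊢
      omega
    · rintro ⟨v, hv, rfl⟩
      refine ⟨v, ?_, rfl⟩
      have := hparv v
      rw [Nat.odd_iff] at hv ⊢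
      omega
end
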